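/- arXiv:2204.07329 — 5 statements merged into one kernel-verified Lean document; each statement's English description precedes it below -/
import Mathlib

section
/- Let ε ∈ (0,1), Σ ∈ ℝ^{n×n} positive semidefinite, A ∈ ℝ^{m×n}, b ∈ ℝ^m, and c ∈ ℝ, and set L(ξ) = ‖Aξ + b‖² + c. Then sup_{P ∈ M(Σ)} CVaR_ε^P[L(ξ)] ≥ c + ‖b‖² + (1/ε)·Tr(Σ Aᵀ A). -/
open MeasureTheory Matrix Kronecker

/-- Spectral norm (largest singular value) of a real matrix, as the operator norm of the
induced map between Euclidean spaces. -/
noncomputable def specNorm {m n : Type*} [Fintype m] [Fintype n] [DecidableEq n]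
    (A : Matrix m n ℝ) : ℝ :=
  ‖LinearMap.toContinuousLinearMap (Matrix.toEuclideanLin A)‖

/-- Conditional value-at-risk at level `ε` of the loss `L` under the measure `P`:
`CVaR_ε^P[L] = inf_β ( β + (1/ε) E_P[max (L ξ - β) 0] )`. -/
noncomputable def CVaR {ι : Type*} [Fintype ι] (ε : ℝ)
    (P : Measure (EuclideanSpace ℝ ι)) (L : EuclideanSpace ℝ ι → ℝ) : ℝ :=
  ⨅ β : ℝ, (β + ε⁻¹ * ∫ ξ, max (L ξ - β) 0 ∂P)

/-- The set `M(S)` of Borel probability measures with zero mean and covariance `S`. -/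
def MomentSet {ι : Type*} [Fintype ι] (S : Matrix ι ι ℝ) :
    Set (Measure (EuclideanSpace ℝ ι)) :=
  {P | IsProbabilityMeasure P ∧
       (∀ i, Integrable (fun ξ => ξ i) P) ∧
       (∀ i, ∫ ξ, ξ i ∂P = 0) ∧
       (∀ i j, Integrable (fun ξ => ξ i * ξ j) P) ∧
       (∀ i j, ∫ ξ, ξ i * ξ j ∂P = S i j)}

/-- Worst-case CVaR over the moment set `M(S)`. -/
noncomputable def wcCVaR {ι : Type*} [Fintype ι] (ε : ℝ) (S : Matrix ι ι ℝ)
    (L : EuclideanSpace ℝ ι → ℝ) : ℝ :=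
  ⨆ P : MomentSet S, CVaR ε (P : Measure (EuclideanSpace ℝ ι)) L

open scoped ENNReal


variable {α : Type*} [MeasurableSpace α] [MeasurableSingletonClass α]

lemma integrable_dirac'' (f : α → ℝ) (a : α) : Integrable f (Measure.dirac a) := by
  have h : f =ᵐ[Measure.dirac a] fun _ => f a := by
    rw [Filter.EventuallyEq, ae_iff]
    refine measure_mono_null (fun x hx => ?_) (by simp : Measure.dirac a {a}ᶜ = 0)
    simp only [Set.mem_setOf_eq] at hx
    simp only [Set.mem_compl_iff, Set.mem_singleton_iff]
    rintro rfl; exact hx rfl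
  exact (integrable_const (f a)).congr h.symm

lemma integrable_comb (w0 w : ℝ≥0∞) (hw0 : w0 ≠ ⊤) (hw : w ≠ ⊤) (x0 : α) {k : ℕ}
    (p q : Fin k → α) (f : α → ℝ) :
    Integrable f (w0 • Measure.dirac x0 +
      w • ∑ i : Fin k, (Measure.dirac (p i) + Measure.dirac (q i))) := by
  refine Integrable.add_measure (((integrable_dirac'' f x0)).smul_measure hw0) ?_
  refine Integrable.smul_measure ?_ hw
  exact integrable_finset_sum_measure.2 fun i _ =>
    ((integrable_dirac'' f (p i)).add_measure (integrable_dirac'' f (q i)))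

lemma integral_comb (w0 w : ℝ≥0∞) (hw0 : w0 ≠ ⊤) (hw : w ≠ ⊤) (x0 : α) {k : ℕ}
    (p q : Fin k → α) (f : α → ℝ) :
    ∫ x, f x ∂(w0 • Measure.dirac x0 +
      w • ∑ i : Fin k, (Measure.dirac (p i) + Measure.dirac (q i))) =
      w0.toReal * f x0 + w.toReal * ∑ i : Fin k, (f (p i) + f (q i)) := by
  rw [integral_add_measure (((integrable_dirac'' f x0)).smul_measure hw0)
    (Integrable.smul_measure (integrable_finset_sum_measure.2 fun i _ =>
      ((integrable_dirac'' f (p i)).add_measure (integrable_dirac'' f (q i)))) hw),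
    integral_smul_measure, integral_smul_measure, integral_dirac,
    integral_finset_sum_measure (fun i _ =>
      ((integrable_dirac'' f (p i)).add_measure (integrable_dirac'' f (q i))))]
  congr 2
  refine Finset.sum_congr rfl fun i _ => ?_
  rw [integral_add_measure (integrable_dirac'' f (p i)) (integrable_dirac'' f (q i)),
    integral_dirac, integral_dirac]

lemma normsq_eucl {k : ℕ} (v : EuclideanSpace ℝ (Fin k)) : ‖v‖^2 = ∑ i, (v i)^2 := by
  rw [← real_inner_self_eq_norm_sq]
  simp only [PiLp.inner_apply, RCLike.inner_apply, conj_trivial, sq]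

lemma L_repr {n m : ℕ} (A : Matrix (Fin m) (Fin n) ℝ) (b : EuclideanSpace ℝ (Fin m)) (c : ℝ)
    (ξ : EuclideanSpace ℝ (Fin n)) :
    ‖Matrix.toEuclideanLin A ξ + b‖^2 + c =
      (∑ j, ∑ k, (Aᵀ*A) j k * (ξ j * ξ k)) +
        ((∑ j, (2 * ∑ i, b i * A i j) * ξ j) + (‖b‖^2 + c)) := by
  have h0 : ∀ i, (Matrix.toEuclideanLin A ξ + b) i = (∑ j, A i j * ξ j) + b i := fun i => rfl
  rw [normsq_eucl, normsq_eucl]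
  simp only [h0]
  have e1 : ∀ i : Fin m, ((∑ j, A i j * ξ j) + b i)^2 =
      (∑ j, A i j * ξ j)^2 + 2 * b i * (∑ j, A i j * ξ j) + (b i)^2 := fun i => by ring
  have e2 : ∑ i : Fin m, (∑ j, A i j * ξ j)^2 = ∑ j, ∑ k, (Aᵀ*A) j k * (ξ j * ξ k) := by
    calc ∑ i : Fin m, (∑ j, A i j * ξ j)^2
        = ∑ i : Fin m, ∑ j, ∑ k, (A i j * ξ j) * (A i k * ξ k) := by
          refine Finset.sum_congr rfl fun i _ => ?_
          rw [sq, Finset.sum_mul_sum]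
      _ = ∑ j, ∑ i : Fin m, ∑ k, (A i j * ξ j) * (A i k * ξ k) := Finset.sum_comm
      _ = ∑ j, ∑ k, ∑ i : Fin m, (A i j * ξ j) * (A i k * ξ k) :=
          Finset.sum_congr rfl fun j _ => Finset.sum_comm
      _ = ∑ j, ∑ k, (Aᵀ*A) j k * (ξ j * ξ k) := by
          refine Finset.sum_congr rfl fun j _ => Finset.sum_congr rfl fun k _ => ?_
          rw [Matrix.mul_apply, Finset.sum_mul]
          exact Finset.sum_congr rfl fun i _ => by rw [Matrix.transpose_apply]; ring
  have e3 : ∑ i : Fin m, 2 * b i * (∑ j, A i j * ξ j) = ∑ j, (2 * ∑ i, b i * A i j) * ξ j := by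
    calc ∑ i : Fin m, 2 * b i * (∑ j, A i j * ξ j)
        = ∑ i : Fin m, ∑ j, 2 * b i * (A i j * ξ j) := by
          refine Finset.sum_congr rfl fun i _ => ?_; rw [Finset.mul_sum]
      _ = ∑ j, ∑ i : Fin m, 2 * b i * (A i j * ξ j) := Finset.sum_comm
      _ = ∑ j, (2 * ∑ i, b i * A i j) * ξ j := by
          refine Finset.sum_congr rfl fun j _ => ?_
          rw [Finset.mul_sum, Finset.sum_mul]
          exact Finset.sum_congr rfl fun i _ => by ring
  simp only [e1, Finset.sum_add_distrib]
  rw [e2, e3]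
  ring
lemma trace_eq_sum {n m : ℕ} (S : Matrix (Fin n) (Fin n) ℝ) (A : Matrix (Fin m) (Fin n) ℝ) :
    Matrix.trace (S * Aᵀ * A) = ∑ j, ∑ k, (Aᵀ*A) j k * S j k := by
  rw [Matrix.mul_assoc, Matrix.trace]
  simp only [Matrix.diag_apply, Matrix.mul_apply]
  refine Finset.sum_congr rfl fun j _ => Finset.sum_congr rfl fun k _ => ?_
  have hsym : (∑ i, Aᵀ k i * A i j) = ∑ i, Aᵀ j i * A i k := by
    simp only [Matrix.transpose_apply]
    exact Finset.sum_congr rfl fun i _ => by ring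
  rw [hsym]; ring

lemma momentSet_integrable_L {n m : ℕ} {S : Matrix (Fin n) (Fin n) ℝ}
    (A : Matrix (Fin m) (Fin n) ℝ) (b : EuclideanSpace ℝ (Fin m)) (c : ℝ)
    {Q : Measure (EuclideanSpace ℝ (Fin n))} (hQ : Q ∈ MomentSet S) :
    Integrable (fun ξ => ‖Matrix.toEuclideanLin A ξ + b‖^2 + c) Q := by
  obtain ⟨hprob, hint1, hmean, hint2, hcov⟩ := hQ
  have : (fun ξ : EuclideanSpace ℝ (Fin n) => ‖Matrix.toEuclideanLin A ξ + b‖^2 + c) =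
      fun ξ => (∑ j, ∑ k, (Aᵀ*A) j k * (ξ j * ξ k)) +
        ((∑ j, (2 * ∑ i, b i * A i j) * ξ j) + (‖b‖^2 + c)) := funext fun ξ => L_repr A b c ξ
  rw [this]
  refine Integrable.add ?_ (Integrable.add ?_ (integrable_const _))
  · exact integrable_finset_sum _ fun j _ => integrable_finset_sum _ fun k _ =>
      (hint2 j k).const_mul _
  · exact integrable_finset_sum _ fun j _ => (hint1 j).const_mul _

lemma momentSet_integral_L {n m : ℕ} {S : Matrix (Fin n) (Fin n) ℝ}
    (A : Matrix (Fin m) (Fin n) ℝ) (b : EuclideanSpace ℝ (Fin m)) (c : ℝ)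
    {Q : Measure (EuclideanSpace ℝ (Fin n))} (hQ : Q ∈ MomentSet S) :
    ∫ ξ, (‖Matrix.toEuclideanLin A ξ + b‖^2 + c) ∂Q =
      Matrix.trace (S * Aᵀ * A) + ‖b‖^2 + c := by
  obtain ⟨hprob, hint1, hmean, hint2, hcov⟩ := hQ
  have hrw : ∫ ξ, (‖Matrix.toEuclideanLin A ξ + b‖^2 + c) ∂Q =
      ∫ ξ, ((∑ j, ∑ k, (Aᵀ*A) j k * (ξ j * ξ k)) +
        ((∑ j, (2 * ∑ i, b i * A i j) * ξ j) + (‖b‖^2 + c))) ∂Q := by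
    exact integral_congr_ae (Filter.Eventually.of_forall fun ξ => L_repr A b c ξ)
  rw [hrw]
  have i1 : Integrable (fun ξ : EuclideanSpace ℝ (Fin n) =>
      ∑ j, ∑ k, (Aᵀ*A) j k * (ξ j * ξ k)) Q :=
    integrable_finset_sum _ fun j _ => integrable_finset_sum _ fun k _ =>
      (hint2 j k).const_mul _
  have i2 : Integrable (fun ξ : EuclideanSpace ℝ (Fin n) =>
      ∑ j, (2 * ∑ i, b i * A i j) * ξ j) Q :=
    integrable_finset_sum _ fun j _ => (hint1 j).const_mul _
  have i3 : Integrable (fun ξ : EuclideanSpace ℝ (Fin n) =>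
      (∑ j, (2 * ∑ i, b i * A i j) * ξ j) + (‖b‖^2 + c)) Q :=
    i2.add (integrable_const _)
  have i4 : Integrable (fun _ : EuclideanSpace ℝ (Fin n) => ‖b‖^2 + c) Q := integrable_const _
  rw [integral_add i1 i3, integral_add i2 i4]
  have e1 : ∫ ξ, (∑ j, ∑ k, (Aᵀ*A) j k * (ξ j * ξ k)) ∂Q = Matrix.trace (S * Aᵀ * A) := by
    rw [integral_finset_sum _ fun j _ => integrable_finset_sum _ fun k _ =>
      (hint2 j k).const_mul ((Aᵀ*A) j k), trace_eq_sum]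
    refine Finset.sum_congr rfl fun j _ => ?_
    rw [integral_finset_sum _ fun k _ => (hint2 j k).const_mul ((Aᵀ*A) j k)]
    refine Finset.sum_congr rfl fun k _ => ?_
    rw [integral_const_mul, hcov j k]
  have e2 : ∫ ξ, (∑ j, (2 * ∑ i, b i * A i j) * ξ j) ∂Q = 0 := by
    rw [integral_finset_sum _ fun j _ => (hint1 j).const_mul _]
    refine Finset.sum_eq_zero fun j _ => ?_
    rw [integral_const_mul, hmean j, mul_zero]
  rw [e1, e2, integral_const]
  simp [measure_univ]
  ring

lemma momentSet_CVaR_le {n m : ℕ} {ε : ℝ} (hε : ε ∈ Set.Ioo (0:ℝ) 1)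
    {S : Matrix (Fin n) (Fin n) ℝ}
    (A : Matrix (Fin m) (Fin n) ℝ) (b : EuclideanSpace ℝ (Fin m)) (c : ℝ)
    {Q : Measure (EuclideanSpace ℝ (Fin n))} (hQ : Q ∈ MomentSet S) :
    CVaR ε Q (fun ξ => ‖Matrix.toEuclideanLin A ξ + b‖^2 + c) ≤
      c + ε⁻¹ * (Matrix.trace (S * Aᵀ * A) + ‖b‖^2) := by
  obtain ⟨hε0, hε1⟩ := hε
  haveI hprob : IsProbabilityMeasure Q := hQ.1
  have hLint := momentSet_integrable_L A b c hQ
  have hEL := momentSet_integral_L A b c hQ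
  set L : EuclideanSpace ℝ (Fin n) → ℝ :=
    fun ξ => ‖Matrix.toEuclideanLin A ξ + b‖^2 + c with hLdef
  set EL : ℝ := Matrix.trace (S * Aᵀ * A) + ‖b‖^2 + c with hELdef
  have hub : ∀ β : ℝ, EL ≤ β + ε⁻¹ * ∫ ξ, max (L ξ - β) 0 ∂Q := by
    intro β
    have hi : Integrable (fun ξ => L ξ - β) Q := hLint.sub (integrable_const β)
    have him : Integrable (fun ξ => max (L ξ - β) 0) Q := hi.pos_part
    have h0 : 0 ≤ ∫ ξ, max (L ξ - β) 0 ∂Q :=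
      integral_nonneg fun ξ => le_max_right _ _
    have h1 : ∫ ξ, (L ξ - β) ∂Q ≤ ∫ ξ, max (L ξ - β) 0 ∂Q :=
      integral_mono hi him fun ξ => le_max_left _ _
    have h2 : ∫ ξ, (L ξ - β) ∂Q = EL - β := by
      rw [integral_sub hLint (integrable_const β), hEL, integral_const]
      simp
    rw [h2] at h1
    have hinv : 1 ≤ ε⁻¹ := one_le_inv₀ hε0 |>.2 <| id (le_of_lt hε1)
    have hinv0 : 0 ≤ ε⁻¹ := by positivity
    rcases le_total β EL with h | h
    · nlinarith [mul_le_mul_of_nonneg_left h1 hinv0]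
    · nlinarith [mul_nonneg hinv0 h0]
  have hbdd : BddBelow (Set.range fun β : ℝ => β + ε⁻¹ * ∫ ξ, max (L ξ - β) 0 ∂Q) :=
    ⟨EL, by rintro x ⟨β, rfl⟩; exact hub β⟩
  have hle := ciInf_le hbdd c
  have hc : ∫ ξ, max (L ξ - c) 0 ∂Q = EL - c := by
    have hcongr : ∫ ξ, max (L ξ - c) 0 ∂Q = ∫ ξ, (L ξ - c) ∂Q := by
      refine integral_congr_ae (Filter.Eventually.of_forall fun ξ => ?_)
      exact max_eq_left (by simp [hLdef])
    rw [hcongr, integral_sub hLint (integrable_const c), hEL, integral_const]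
    simp
  rw [CVaR]
  refine le_trans hle ?_
  rw [hc, hELdef]
  ring_nf
  exact le_refl _

/-- lower bound on the worst-case CVaR of `‖Aξ + b‖² + c`. -/
theorem stmt2 {n m : ℕ} (ε : ℝ) (hε : ε ∈ Set.Ioo (0 : ℝ) 1)
    (S : Matrix (Fin n) (Fin n) ℝ) (hS : S.PosSemidef)
    (A : Matrix (Fin m) (Fin n) ℝ) (b : EuclideanSpace ℝ (Fin m)) (c : ℝ) :
    c + ‖b‖ ^ 2 + ε⁻¹ * Matrix.trace (S * Aᵀ * A) ≤
      wcCVaR ε S (fun ξ => ‖Matrix.toEuclideanLin A ξ + b‖ ^ 2 + c) := by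
  obtain ⟨hε0, hε1⟩ := hε
  have hn1 : (0:ℝ) < (n:ℝ) + 1 := by positivity
  set C : Matrix (Fin n) (Fin n) ℝ := open scoped MatrixOrder in CFC.sqrt S with hCdef
  have hCC : C * C = S := open scoped MatrixOrder in CFC.sqrt_mul_sqrt_self S hS.nonneg
  have hherm : Cᴴ = C := open scoped MatrixOrder in (CFC.sqrt_nonneg S).posSemidef.1
  have hCsymm : ∀ i j, C i j = C j i := by
    intro i j
    conv_lhs => rw [← hherm]
    simp [Matrix.conjTranspose_apply]
  set t : ℝ := Real.sqrt (((n:ℝ)+1)/ε) with htdef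
  have ht2 : t^2 = ((n:ℝ)+1)/ε := Real.sq_sqrt (by positivity)
  set v : Fin n → EuclideanSpace ℝ (Fin n) :=
    fun k => (WithLp.equiv 2 (Fin n → ℝ)).symm (fun i => C i k) with hvdef
  set a : Fin n → EuclideanSpace ℝ (Fin n) := fun k => t • v k with hadef
  have hva : ∀ k i, a k i = t * C i k := by
    intro k i; simp [hadef, hvdef]
  have hvna : ∀ k i, (-(a k)) i = -(t * C i k) := by
    intro k i; rw [← hva k i]; rfl
  set w0R : ℝ := (1 - ε) + ε/((n:ℝ)+1) with hw0Rdef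
  set wR : ℝ := ε/(2*((n:ℝ)+1)) with hwRdef
  have hw0R : 0 ≤ w0R := by
    have : (0:ℝ) ≤ 1 - ε := by linarith
    positivity
  have hwR : 0 ≤ wR := by positivity
  set P : Measure (EuclideanSpace ℝ (Fin n)) :=
    ENNReal.ofReal w0R • Measure.dirac 0 +
      ENNReal.ofReal wR • ∑ k : Fin n, (Measure.dirac (a k) + Measure.dirac (-(a k)))
    with hPdef
  have hPint : ∀ f : EuclideanSpace ℝ (Fin n) → ℝ, Integrable f P := fun f =>
    integrable_comb _ _ ENNReal.ofReal_ne_top ENNReal.ofReal_ne_top _ _ _ f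
  have hPval : ∀ f : EuclideanSpace ℝ (Fin n) → ℝ,
      ∫ x, f x ∂P = w0R * f 0 + wR * ∑ k : Fin n, (f (a k) + f (-(a k))) := by
    intro f
    rw [hPdef, integral_comb _ _ ENNReal.ofReal_ne_top ENNReal.ofReal_ne_top,
      ENNReal.toReal_ofReal hw0R, ENNReal.toReal_ofReal hwR]
  have hPprob : IsProbabilityMeasure P := by
    constructor
    rw [hPdef, Measure.add_apply, Measure.smul_apply, Measure.smul_apply,
      Measure.finset_sum_apply]
    simp only [Measure.dirac_apply_of_mem (Set.mem_univ _), Measure.add_apply,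
      Finset.sum_const, Finset.card_univ, Fintype.card_fin, nsmul_eq_mul, mul_one]
    rw [show ((1:ℝ≥0∞) + 1) = (((2:ℕ):ℝ≥0∞)) by norm_num,
      show ((n:ℝ≥0∞) * ((2:ℕ):ℝ≥0∞)) = (((n*2 : ℕ)):ℝ≥0∞) by push_cast; ring,
      ← ENNReal.ofReal_natCast (n*2), smul_eq_mul, smul_eq_mul, mul_one,
      ← ENNReal.ofReal_mul hwR,
      ← ENNReal.ofReal_add hw0R (by positivity),
      show w0R + wR * ((n*2 : ℕ):ℝ) = 1 by
        rw [hw0Rdef, hwRdef]; push_cast; field_simp; ring]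
    exact ENNReal.ofReal_one
  have hmean : ∀ i, ∫ ξ, ξ i ∂P = 0 := by
    intro i
    rw [hPval (fun ξ => ξ i)]
    simp only [hva, hvna]
    simp
  have hcov : ∀ i j, ∫ ξ, ξ i * ξ j ∂P = S i j := by
    intro i j
    rw [hPval (fun ξ => ξ i * ξ j)]
    simp only [hva, hvna]
    have hcoef : wR * (2 * t^2) = 1 := by
      rw [ht2, hwRdef]; field_simp
    calc w0R * ((0:EuclideanSpace ℝ (Fin n)) i * (0:EuclideanSpace ℝ (Fin n)) j)
          + wR * ∑ k : Fin n, (t * C i k * (t * C j k) + -(t * C i k) * -(t * C j k))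
        = ∑ k : Fin n, (wR * (2 * t^2)) * (C i k * C j k) := by
          have hz : (0:EuclideanSpace ℝ (Fin n)) i = 0 := rfl
          have hz' : (0:EuclideanSpace ℝ (Fin n)) j = 0 := rfl
          rw [hz, hz', Finset.mul_sum]
          rw [mul_zero, mul_zero, zero_add]
          exact Finset.sum_congr rfl fun k _ => by ring
      _ = ∑ k : Fin n, C i k * C j k := by
          simp [hcoef]
      _ = S i j := by
          rw [← hCC, Matrix.mul_apply]
          exact Finset.sum_congr rfl fun k _ => by rw [hCsymm k j]
  have hP_mem : P ∈ MomentSet S :=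
    ⟨hPprob, fun i => hPint _, hmean, fun i j => hPint _, hcov⟩
  -- trace identity
  set Tr : ℝ := Matrix.trace (S * Aᵀ * A) with hTrdef
  have hTr : ∑ k : Fin n, ‖Matrix.toEuclideanLin A (v k)‖^2 = Tr := by
    have hCt : Cᵀ = C := by
      ext i j
      rw [Matrix.transpose_apply]
      exact hCsymm j i
    have h1 : ∀ k, ‖Matrix.toEuclideanLin A (v k)‖^2 = ∑ i, ((A*C) i k)^2 := by
      intro k
      rw [normsq_eucl]
      refine Finset.sum_congr rfl fun i _ => ?_
      have : Matrix.toEuclideanLin A (v k) i = ∑ j, A i j * C j k := rfl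
      rw [this, Matrix.mul_apply]
    have h2 : Tr = Matrix.trace ((A*C)ᵀ * (A*C)) := by
      rw [hTrdef, Matrix.transpose_mul, hCt, ← hCC]
      rw [Matrix.trace_mul_comm (C*C*Aᵀ) A, Matrix.trace_mul_comm (C*Aᵀ) (A*C)]
      congr 1
      simp only [Matrix.mul_assoc]
    rw [h2, Matrix.trace]
    simp only [h1, Matrix.diag_apply, Matrix.mul_apply, Matrix.transpose_apply, sq]
  -- values of L at the atoms
  set L : EuclideanSpace ℝ (Fin n) → ℝ :=
    fun ξ => ‖Matrix.toEuclideanLin A ξ + b‖ ^ 2 + c with hLdef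
  have hL0 : L 0 = ‖b‖^2 + c := by simp [hLdef]
  have hLa : ∀ k, L (a k) + L (-(a k)) =
      2*t^2*‖Matrix.toEuclideanLin A (v k)‖^2 + 2*‖b‖^2 + 2*c := by
    intro k
    have hu : Matrix.toEuclideanLin A (a k) = t • Matrix.toEuclideanLin A (v k) := by
      rw [hadef]; exact map_smul _ t (v k)
    set u : EuclideanSpace ℝ (Fin m) := Matrix.toEuclideanLin A (v k) with hudef
    have hneg : Matrix.toEuclideanLin A (-(a k)) + b = b - t • u := by
      rw [map_neg, hu, neg_add_eq_sub]
    have hplus : Matrix.toEuclideanLin A (a k) + b = t • u + b := by rw [hu]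
    rw [hLdef]
    simp only [hplus, hneg]
    rw [norm_add_sq_real, norm_sub_sq_real, real_inner_comm b (t • u)]
    have hns : ‖t • u‖^2 = t^2 * ‖u‖^2 := by
      rw [norm_smul, mul_pow, Real.norm_eq_abs, sq_abs]
    rw [hns]; ring
  -- key lower bound
  have key : ∀ β : ℝ, c + ‖b‖ ^ 2 + ε⁻¹ * Tr ≤ β + ε⁻¹ * ∫ ξ, max (L ξ - β) 0 ∂P := by
    intro β
    rw [hPval (fun ξ => max (L ξ - β) 0)]
    set B : ℝ := ‖b‖^2 + c with hBdef
    have step1 : (ε/((n:ℝ)+1)) * (B - β) ≤ w0R * max (L 0 - β) 0 := by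
      have h1 : (0:ℝ) ≤ max (L 0 - β) 0 := le_max_right _ _
      have h2 : B - β ≤ max (L 0 - β) 0 := by rw [hL0]; exact le_max_left _ _
      have h3 : (0:ℝ) ≤ ε/((n:ℝ)+1) := by positivity
      have h4 := mul_le_mul_of_nonneg_left h2 h3
      have h5 : (0:ℝ) ≤ (1-ε) * max (L 0 - β) 0 := mul_nonneg (by linarith) h1
      rw [hw0Rdef]; nlinarith
    have step2 : 2*t^2*Tr + 2*(n:ℝ)*(B - β) ≤
        ∑ k : Fin n, (max (L (a k) - β) 0 + max (L (-(a k)) - β) 0) := by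
      have hsum : ∑ k : Fin n, ((L (a k) - β) + (L (-(a k)) - β)) ≤
          ∑ k : Fin n, (max (L (a k) - β) 0 + max (L (-(a k)) - β) 0) :=
        Finset.sum_le_sum fun k _ => add_le_add (le_max_left _ _) (le_max_left _ _)
      refine le_trans (le_of_eq ?_) hsum
      have : ∀ k : Fin n, (L (a k) - β) + (L (-(a k)) - β) =
          2*t^2*‖Matrix.toEuclideanLin A (v k)‖^2 + (2*B - 2*β) := by
        intro k
        have := hLa k
        rw [hBdef]; linarith
      rw [Finset.sum_congr rfl fun k _ => this k, Finset.sum_add_distrib,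
        Finset.sum_const, Finset.card_univ, Fintype.card_fin, ← Finset.mul_sum, hTr]
      push_cast
      ring
    have hmono : (ε/((n:ℝ)+1)) * (B - β) + wR * (2*t^2*Tr + 2*(n:ℝ)*(B - β)) ≤
        w0R * max (L 0 - β) 0 +
          wR * ∑ k : Fin n, (max (L (a k) - β) 0 + max (L (-(a k)) - β) 0) :=
      add_le_add step1 (mul_le_mul_of_nonneg_left step2 hwR)
    have hinv0 : (0:ℝ) ≤ ε⁻¹ := by positivity
    have harith : β + ε⁻¹*((ε/((n:ℝ)+1)) * (B - β) + wR * (2*t^2*Tr + 2*(n:ℝ)*(B - β)))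
        = c + ‖b‖ ^ 2 + ε⁻¹ * Tr := by
      rw [ht2, hwRdef, hBdef]
      have hεne : ε ≠ 0 := ne_of_gt hε0
      have hnne : ((n:ℝ)+1) ≠ 0 := ne_of_gt hn1
      field_simp
      ring
    calc c + ‖b‖ ^ 2 + ε⁻¹ * Tr
        = β + ε⁻¹*((ε/((n:ℝ)+1)) * (B - β) + wR * (2*t^2*Tr + 2*(n:ℝ)*(B - β))) :=
          harith.symm
      _ ≤ β + ε⁻¹ * (w0R * max (L 0 - β) 0 +
            wR * ∑ k : Fin n, (max (L (a k) - β) 0 + max (L (-(a k)) - β) 0)) := by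
          exact add_le_add_right (mul_le_mul_of_nonneg_left hmono hinv0) β
  have hlow : c + ‖b‖ ^ 2 + ε⁻¹ * Tr ≤ CVaR ε P L := le_ciInf key
  have hBddA : BddAbove (Set.range fun (Q : MomentSet S) =>
      CVaR ε (Q : Measure (EuclideanSpace ℝ (Fin n))) L) := by
    refine ⟨c + ε⁻¹ * (Tr + ‖b‖^2), ?_⟩
    rintro x ⟨Q, rfl⟩
    exact momentSet_CVaR_le ⟨hε0, hε1⟩ A b c Q.2
  exact hlow.trans (le_ciSup hBddA (⟨P, hP_mem⟩ : MomentSet S))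
end

section
/- Worst-case CVaR ultimate bound (Theorem 1): consider x_{t+1} = A x_t + E w_t with spectral norm ‖A‖ < 1 and Σ_w positive semidefinite, and let P := Σ_{k=0}^∞ A^k E Σ_w Eᵀ (Aᵀ)^k. If r > 0 satisfies r² > (1/ε)·Tr(P), then the ball D = {x : ‖x‖² ≤ r²} is a worst-case CVaR ultimate bound: for every initial state x₀ ∈ ℝ^{n_x} there exists T > 0 such that for all t ≥ T, sup_{P ∈ M_t} CVaR_ε^P[ ‖A^t x₀ + H_t w̄_t‖² − r² ] ≤ 0. -/
set_option linter.unusedSectionVars false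
set_option maxHeartbeats 1000000

open MeasureTheory Matrix Kronecker

/-- The block matrix `H_t = [A^(t-1) E, A^(t-2) E, ..., E]`, viewed as a matrix acting on the
stacked disturbance vector `w̄_t = (w_0, ..., w_(t-1))` (indexed by `Fin t × Fin nw`),
so that `H_t w̄_t = Σ_k A^(t-1-k) E w_k`. -/
noncomputable def Hmat {nx nw : ℕ} (A : Matrix (Fin nx) (Fin nx) ℝ)
    (E : Matrix (Fin nx) (Fin nw) ℝ) (t : ℕ) :
    Matrix (Fin nx) (Fin t × Fin nw) ℝ :=
  Matrix.of fun i p => (A ^ (t - 1 - (p.1 : ℕ)) * E) i p.2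

section aux
variable {m n p : Type*} [Fintype m] [Fintype n] [Fintype p]

lemma euclid_norm_sq (v : EuclideanSpace ℝ n) : ‖v‖ ^ 2 = ∑ i, (v i) ^ 2 := by
  rw [EuclideanSpace.norm_eq, Real.sq_sqrt (by positivity)]
  simp [sq_abs]

lemma euclid_coord_le_norm (v : EuclideanSpace ℝ n) (i : n) : |v i| ≤ ‖v‖ := by
  have h : (v i) ^ 2 ≤ ‖v‖ ^ 2 := by
    rw [euclid_norm_sq]
    exact Finset.single_le_sum (f := fun j => (v j) ^ 2) (fun j _ => sq_nonneg _)
      (Finset.mem_univ i)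
  nlinarith [abs_nonneg (v i), norm_nonneg v, sq_abs (v i)]

lemma euclidLin_coord [DecidableEq n] (M : Matrix m n ℝ) (v : EuclideanSpace ℝ n) (i : m) :
    (Matrix.toEuclideanLin M v) i = ∑ j, M i j * v j := by
  simp [Matrix.toEuclideanLin_apply, Matrix.mulVec, dotProduct]

lemma euclidLin_mul [DecidableEq n] [DecidableEq p] (M : Matrix m n ℝ) (N : Matrix n p ℝ)
    (v : EuclideanSpace ℝ p) :
    Matrix.toEuclideanLin (M * N) v = Matrix.toEuclideanLin M (Matrix.toEuclideanLin N v) := by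
  simp [Matrix.toEuclideanLin_apply, Matrix.mulVec_mulVec]

lemma euclidLin_le [DecidableEq n] (A : Matrix m n ℝ) (v : EuclideanSpace ℝ n) :
    ‖Matrix.toEuclideanLin A v‖ ≤ specNorm A * ‖v‖ :=
  (LinearMap.toContinuousLinearMap (Matrix.toEuclideanLin A)).le_opNorm v

lemma euclidLin_pow_le [DecidableEq n] (A : Matrix n n ℝ) (k : ℕ) (v : EuclideanSpace ℝ n) :
    ‖Matrix.toEuclideanLin (A ^ k) v‖ ≤ specNorm A ^ k * ‖v‖ := by
  induction k with
  | zero => simp [Matrix.toEuclideanLin_apply]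
  | succ k ih =>
    rw [pow_succ']
    rw [euclidLin_mul]
    calc ‖Matrix.toEuclideanLin A (Matrix.toEuclideanLin (A ^ k) v)‖
        ≤ specNorm A * ‖Matrix.toEuclideanLin (A ^ k) v‖ := euclidLin_le _ _
      _ ≤ specNorm A * (specNorm A ^ k * ‖v‖) := by
          exact mul_le_mul_of_nonneg_left ih (norm_nonneg _)
      _ = specNorm A ^ (k + 1) * ‖v‖ := by ring

lemma entry_pow_le [DecidableEq n] (A : Matrix n n ℝ) (k : ℕ) (i a : n) :
    |(A ^ k) i a| ≤ specNorm A ^ k := by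
  have h1 : (A ^ k) i a = (Matrix.toEuclideanLin (A ^ k) (EuclideanSpace.single a 1)) i := by
    rw [euclidLin_coord]
    simp [EuclideanSpace.single_apply]
  rw [h1]
  calc |(Matrix.toEuclideanLin (A ^ k) (EuclideanSpace.single a 1)) i|
      ≤ ‖Matrix.toEuclideanLin (A ^ k) (EuclideanSpace.single a 1)‖ := euclid_coord_le_norm _ _
    _ ≤ specNorm A ^ k * ‖EuclideanSpace.single a (1:ℝ)‖ := euclidLin_pow_le _ _ _
    _ = specNorm A ^ k := by rw [EuclideanSpace.norm_single]; simp

lemma trace_quad (B : Matrix m n ℝ) (Sw : Matrix n n ℝ) :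
    Matrix.trace (B * Sw * Bᵀ) = ∑ i, ∑ j, ∑ l, B i j * Sw j l * B i l := by
  simp only [Matrix.trace, Matrix.diag, Matrix.mul_apply, Matrix.transpose_apply,
    Finset.sum_mul]
  refine Finset.sum_congr rfl fun i _ => ?_
  rw [Finset.sum_comm]

end aux

section sums
variable {n : Type*} [Fintype n] [DecidableEq n] (A G : Matrix n n ℝ)

lemma fM_entry_bound (hA0 : 0 ≤ specNorm A) (k : ℕ) (i j : n) :
    |(A ^ k * G * (Aᵀ) ^ k) i j| ≤ (∑ b, ∑ a, |G a b|) * (specNorm A ^ 2) ^ k := by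
  set ρ := specNorm A
  have hexp : (A ^ k * G * (Aᵀ) ^ k) i j = ∑ b, ∑ a, (A ^ k) i a * G a b * (A ^ k) j b := by
    rw [Matrix.mul_apply]
    refine Finset.sum_congr rfl fun b _ => ?_
    rw [Matrix.mul_apply, Finset.sum_mul]
    refine Finset.sum_congr rfl fun a _ => ?_
    rw [← Matrix.transpose_pow, Matrix.transpose_apply]
  rw [hexp]
  calc |∑ b, ∑ a, (A ^ k) i a * G a b * (A ^ k) j b|
      ≤ ∑ b, ∑ a, |(A ^ k) i a * G a b * (A ^ k) j b| := by
        refine (Finset.abs_sum_le_sum_abs _ _).trans ?_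
        exact Finset.sum_le_sum fun b _ => Finset.abs_sum_le_sum_abs _ _
    _ ≤ ∑ b, ∑ a, |G a b| * (ρ ^ 2) ^ k := by
        refine Finset.sum_le_sum fun b _ => Finset.sum_le_sum fun a _ => ?_
        rw [abs_mul, abs_mul]
        have h1 := entry_pow_le A k i a
        have h2 := entry_pow_le A k j b
        have : (ρ ^ 2) ^ k = ρ ^ k * ρ ^ k := by ring
        rw [this]
        calc |(A ^ k) i a| * |G a b| * |(A ^ k) j b|
            ≤ ρ ^ k * |G a b| * ρ ^ k := by
              refine mul_le_mul (mul_le_mul h1 le_rfl (abs_nonneg _) (by positivity)) h2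
                (abs_nonneg _) (by positivity)
          _ = |G a b| * (ρ ^ k * ρ ^ k) := by ring
    _ = (∑ b, ∑ a, |G a b|) * (ρ ^ 2) ^ k := by
        rw [Finset.sum_mul]
        exact Finset.sum_congr rfl fun b _ => (Finset.sum_mul _ _ _).symm

lemma summable_entry (hA0 : 0 ≤ specNorm A) (hA : specNorm A < 1) (i j : n) :
    Summable fun k => (A ^ k * G * (Aᵀ) ^ k) i j := by
  have hlt : specNorm A ^ 2 < 1 := by nlinarith
  refine Summable.of_norm_bounded
    ((summable_geometric_of_lt_one (by positivity) hlt).mul_left (∑ b, ∑ a, |G a b|)) ?_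
  intro k
  simpa [Real.norm_eq_abs] using fM_entry_bound A G hA0 k i j

lemma summable_fM (hA0 : 0 ≤ specNorm A) (hA : specNorm A < 1) :
    Summable fun k => A ^ k * G * (Aᵀ) ^ k := by
  exact Pi.summable.mpr fun i => Pi.summable.mpr fun j => summable_entry A G hA0 hA i j

lemma trace_tsum_eq (hA0 : 0 ≤ specNorm A) (hA : specNorm A < 1) :
    Matrix.trace (∑' k : ℕ, A ^ k * G * (Aᵀ) ^ k)
      = ∑' k : ℕ, Matrix.trace (A ^ k * G * (Aᵀ) ^ k) := by
  have hs := summable_fM A G hA0 hA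
  have h1 : ∀ i j : n, (∑' k : ℕ, A ^ k * G * (Aᵀ) ^ k) i j
      = ∑' k : ℕ, (A ^ k * G * (Aᵀ) ^ k) i j := by
    intro i j
    exact (congrFun (tsum_apply (x := i) hs) j).trans (tsum_apply (x := j) (Pi.summable.mp hs i))
  simp only [Matrix.trace, Matrix.diag]
  calc ∑ x : n, (∑' k : ℕ, A ^ k * G * (Aᵀ) ^ k) x x
      = ∑ x : n, ∑' k : ℕ, (A ^ k * G * (Aᵀ) ^ k) x x :=
        Finset.sum_congr rfl fun i _ => h1 i i
    _ = ∑' k : ℕ, ∑ x : n, (A ^ k * G * (Aᵀ) ^ k) x x :=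
        (Summable.tsum_finsetSum (fun i _ => summable_entry A G hA0 hA i i)).symm

lemma summable_g (hA0 : 0 ≤ specNorm A) (hA : specNorm A < 1) :
    Summable fun k => Matrix.trace (A ^ k * G * (Aᵀ) ^ k) := by
  simp only [Matrix.trace, Matrix.diag]
  exact summable_sum fun i _ => summable_entry A G hA0 hA i i

end sums

lemma integral_quad {ι : Type*} [Fintype ι] [DecidableEq ι] (S : Matrix ι ι ℝ)
    (P : Measure (EuclideanSpace ℝ ι)) [IsProbabilityMeasure P]
    (h2 : ∀ i, Integrable (fun ξ => ξ i) P) (h3 : ∀ i, ∫ ξ, ξ i ∂P = 0)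
    (h4 : ∀ i j, Integrable (fun ξ => ξ i * ξ j) P) (h5 : ∀ i j, ∫ ξ, ξ i * ξ j ∂P = S i j)
    {m : Type*} [Fintype m] (M : Matrix m ι ℝ) (c : EuclideanSpace ℝ m) :
    ∫ w, ‖c + Matrix.toEuclideanLin M w‖ ^ 2 ∂P
      = ‖c‖ ^ 2 + ∑ i, ∑ p, ∑ q, M i p * M i q * S p q := by
  have hIL : ∀ i : m, Integrable (fun w : EuclideanSpace ℝ ι => ∑ p, (2 * c i * M i p) * w p) P :=
    fun i => integrable_finset_sum _ (fun p _ => (h2 p).const_mul _)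
  have hIQ : ∀ i : m, Integrable
      (fun w : EuclideanSpace ℝ ι => ∑ p, ∑ q, (M i p * M i q) * (w p * w q)) P :=
    fun i => integrable_finset_sum _
      (fun p _ => integrable_finset_sum _ (fun q _ => (h4 p q).const_mul _))
  have hfun : (fun w : EuclideanSpace ℝ ι => ‖c + Matrix.toEuclideanLin M w‖ ^ 2)
      = fun w => ∑ i, ((c i) ^ 2 + ((∑ p, (2 * c i * M i p) * w p)
          + ∑ p, ∑ q, (M i p * M i q) * (w p * w q))) := by
    funext w
    rw [euclid_norm_sq]
    refine Finset.sum_congr rfl fun i _ => ?_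
    have hco : (c + Matrix.toEuclideanLin M w) i = c i + ∑ p, M i p * w p := by
      have : (c + Matrix.toEuclideanLin M w) i = c i + (Matrix.toEuclideanLin M w) i := rfl
      rw [this, euclidLin_coord]
    rw [hco]
    have hsq : (∑ p, M i p * w p) ^ 2 = ∑ p, ∑ q, (M i p * M i q) * (w p * w q) := by
      rw [sq, Finset.sum_mul_sum]
      exact Finset.sum_congr rfl fun p _ => Finset.sum_congr rfl fun q _ => by ring
    have hlin : 2 * c i * (∑ p, M i p * w p) = ∑ p, (2 * c i * M i p) * w p := by
      rw [Finset.mul_sum]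
      exact Finset.sum_congr rfl fun p _ => by ring
    calc (c i + ∑ p, M i p * w p) ^ 2
        = (c i) ^ 2 + (2 * c i * (∑ p, M i p * w p) + (∑ p, M i p * w p) ^ 2) := by ring
      _ = _ := by rw [hsq, hlin]
  have hInt : ∀ i : m, Integrable (fun w : EuclideanSpace ℝ ι => (c i) ^ 2
      + ((∑ p, (2 * c i * M i p) * w p) + ∑ p, ∑ q, (M i p * M i q) * (w p * w q))) P :=
    fun i => (integrable_const _).add ((hIL i).add (hIQ i))
  rw [hfun, integral_finset_sum _ (fun i _ => hInt i)]
  have hterm : ∀ i : m, ∫ w, ((c i) ^ 2 + ((∑ p, (2 * c i * M i p) * w p)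
      + ∑ p, ∑ q, (M i p * M i q) * (w p * w q))) ∂P
      = (c i) ^ 2 + ∑ p, ∑ q, M i p * M i q * S p q := by
    intro i
    have hLQ : Integrable (fun w : EuclideanSpace ℝ ι => (∑ p, (2 * c i * M i p) * w p)
        + ∑ p, ∑ q, (M i p * M i q) * (w p * w q)) P := (hIL i).add (hIQ i)
    rw [integral_add (integrable_const _) hLQ, integral_add (hIL i) (hIQ i)]
    have e1 : ∫ w, (∑ p, (2 * c i * M i p) * w p) ∂P = 0 := by
      rw [integral_finset_sum _ (fun p _ => (h2 p).const_mul _)]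
      simp only [integral_const_mul, h3, mul_zero, Finset.sum_const_zero]
    have e2 : ∫ w, (∑ p, ∑ q, (M i p * M i q) * (w p * w q)) ∂P
        = ∑ p, ∑ q, M i p * M i q * S p q := by
      rw [integral_finset_sum _
        (fun p _ => integrable_finset_sum _ (fun q _ => (h4 p q).const_mul _))]
      refine Finset.sum_congr rfl fun p _ => ?_
      rw [integral_finset_sum _ (fun q _ => (h4 p q).const_mul _)]
      refine Finset.sum_congr rfl fun q _ => ?_
      rw [integral_const_mul, h5]
    rw [e1, e2, integral_const]
    simp
  rw [Finset.sum_congr rfl fun i _ => hterm i, Finset.sum_add_distrib, euclid_norm_sq c]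

lemma kron_quad {t nw nx : ℕ} (M : Matrix (Fin nx) (Fin t × Fin nw) ℝ)
    (Sw : Matrix (Fin nw) (Fin nw) ℝ) :
    ∑ i, ∑ p, ∑ q, M i p * M i q * ((1 : Matrix (Fin t) (Fin t) ℝ) ⊗ₖ Sw) p q
      = ∑ k : Fin t, ∑ i, ∑ j, ∑ m, M i (k, j) * Sw j m * M i (k, m) := by
  have h1 : ∀ i, ∑ p, ∑ q, M i p * M i q * ((1 : Matrix (Fin t) (Fin t) ℝ) ⊗ₖ Sw) p q
      = ∑ k : Fin t, ∑ j, ∑ m, M i (k, j) * Sw j m * M i (k, m) := by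
    intro i
    rw [Fintype.sum_prod_type]
    refine Finset.sum_congr rfl fun k _ => ?_
    refine Finset.sum_congr rfl fun j _ => ?_
    rw [Fintype.sum_prod_type]
    have h2 : ∀ l : Fin t, ∑ m, M i (k, j) * M i (l, m)
        * ((1 : Matrix (Fin t) (Fin t) ℝ) ⊗ₖ Sw) (k, j) (l, m)
        = if k = l then ∑ m, M i (k, j) * Sw j m * M i (k, m) else 0 := by
      intro l
      by_cases hkl : k = l
      · subst hkl
        simp only [if_true]
        refine Finset.sum_congr rfl fun m _ => ?_
        simp [Matrix.kroneckerMap_apply, Matrix.one_apply]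
        ring
      · simp [Matrix.kroneckerMap_apply, Matrix.one_apply, hkl]
    rw [Finset.sum_congr rfl fun l _ => h2 l]
    simp
  rw [Finset.sum_congr rfl (fun i _ => h1 i), Finset.sum_comm]

lemma quad_nonneg {nw : ℕ} {Sw : Matrix (Fin nw) (Fin nw) ℝ} (hSw : Sw.PosSemidef)
    (v : Fin nw → ℝ) : 0 ≤ ∑ j, ∑ l, v j * Sw j l * v l := by
  have h := hSw.dotProduct_mulVec_nonneg v
  simp only [star_trivial, dotProduct, Matrix.mulVec, Finset.mul_sum] at h
  calc (0:ℝ) ≤ ∑ j, ∑ l, v j * (Sw j l * v l) := h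
    _ = ∑ j, ∑ l, v j * Sw j l * v l :=
      Finset.sum_congr rfl fun j _ => Finset.sum_congr rfl fun l _ => by ring

lemma rev_sum {t : ℕ} (g : ℕ → ℝ) :
    ∑ k : Fin t, g (t - 1 - (k : ℕ)) = ∑ s ∈ Finset.range t, g s := by
  rw [← Fin.sum_univ_eq_sum_range]
  exact Fintype.sum_bijective Fin.rev Fin.rev_bijective _ _
    (fun k => by rw [Fin.val_rev]; congr 1; omega)

lemma cvar_le_of {ι : Type*} [Fintype ι] {ε : ℝ} {P : Measure (EuclideanSpace ℝ ι)}
    {L : EuclideanSpace ℝ ι → ℝ} {β₀ : ℝ}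
    (hb : β₀ + ε⁻¹ * ∫ ξ, max (L ξ - β₀) 0 ∂P ≤ 0) : CVaR ε P L ≤ 0 := by
  unfold CVaR
  by_cases hbd : BddBelow (Set.range fun β : ℝ => β + ε⁻¹ * ∫ ξ, max (L ξ - β) 0 ∂P)
  · exact (ciInf_le hbd β₀).trans hb
  · rw [Real.iInf_of_not_bddBelow hbd]

/-- Theorem 1: worst-case CVaR ultimate bound for `x_{t+1} = A x_t + E w_t`. -/
theorem stmt10 {nx nw : ℕ} (ε : ℝ) (hε : ε ∈ Set.Ioo (0 : ℝ) 1)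
    (A : Matrix (Fin nx) (Fin nx) ℝ) (E : Matrix (Fin nx) (Fin nw) ℝ)
    (Sw : Matrix (Fin nw) (Fin nw) ℝ)
    (hA : specNorm A < 1) (hSw : Sw.PosSemidef)
    (r : ℝ) (hr : 0 < r)
    (hr2 : ε⁻¹ * Matrix.trace (∑' k : ℕ, A ^ k * (E * Sw * Eᵀ) * (Aᵀ) ^ k) < r ^ 2) :
    ∀ x₀ : EuclideanSpace ℝ (Fin nx), ∃ T : ℕ, 0 < T ∧ ∀ t ≥ T,
      wcCVaR ε ((1 : Matrix (Fin t) (Fin t) ℝ) ⊗ₖ Sw)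
        (fun w => ‖Matrix.toEuclideanLin (A ^ t) x₀ +
          Matrix.toEuclideanLin (Hmat A E t) w‖ ^ 2 - r ^ 2) ≤ 0 := by
  obtain ⟨εpos, εlt1⟩ := hε
  intro x₀
  have hρ0 : 0 ≤ specNorm A := norm_nonneg _
  set G := E * Sw * Eᵀ with hG
  have hsg : Summable (fun k : ℕ => Matrix.trace (A ^ k * G * (Aᵀ) ^ k)) :=
    summable_g A G hρ0 hA
  set tr := ∑' k : ℕ, Matrix.trace (A ^ k * G * (Aᵀ) ^ k) with htrdef
  have htr_eq : Matrix.trace (∑' k : ℕ, A ^ k * G * (Aᵀ) ^ k) = tr := trace_tsum_eq A G hρ0 hA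
  have hg_eq : ∀ s : ℕ, Matrix.trace (A ^ s * G * (Aᵀ) ^ s)
      = ∑ i, ∑ j, ∑ l, (A ^ s * E) i j * Sw j l * (A ^ s * E) i l := by
    intro s
    have h : A ^ s * G * (Aᵀ) ^ s = (A ^ s * E) * Sw * (A ^ s * E)ᵀ := by
      rw [Matrix.transpose_mul, Matrix.transpose_pow, hG]
      simp only [Matrix.mul_assoc]
    rw [h, trace_quad]
  have hg0 : ∀ s : ℕ, 0 ≤ Matrix.trace (A ^ s * G * (Aᵀ) ^ s) := by
    intro s
    rw [hg_eq s]
    exact Finset.sum_nonneg fun i _ => quad_nonneg hSw _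
  have htr : tr < ε * r ^ 2 := by
    have h1 : ε⁻¹ * tr < r ^ 2 := by rw [← htr_eq]; exact hr2
    have h2 := mul_lt_mul_of_pos_left h1 εpos
    rwa [← mul_assoc, mul_inv_cancel₀ (ne_of_gt εpos), one_mul] at h2
  set δ := ε * r ^ 2 - tr with hδdef
  have hδ : 0 < δ := by rw [hδdef]; linarith
  have htend : Filter.Tendsto (fun t : ℕ => (specNorm A ^ t * ‖x₀‖) ^ 2)
      Filter.atTop (nhds 0) := by
    have h := ((tendsto_pow_atTop_nhds_zero_of_lt_one hρ0 hA).mul_const ‖x₀‖).pow 2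
    simpa using h
  have hev : ∀ᶠ t in Filter.atTop, (specNorm A ^ t * ‖x₀‖) ^ 2 < δ :=
    htend.eventually_lt_const hδ
  obtain ⟨T₀, hT₀⟩ := Filter.eventually_atTop.mp hev
  refine ⟨T₀ + 1, Nat.succ_pos _, fun t ht => ?_⟩
  set M := Hmat A E t with hM
  set c : EuclideanSpace ℝ (Fin nx) := Matrix.toEuclideanLin (A ^ t) x₀ with hc
  set S := ((1 : Matrix (Fin t) (Fin t) ℝ) ⊗ₖ Sw) with hS
  have hTrt : ∑ i, ∑ p, ∑ q, M i p * M i q * S p q ≤ tr := by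
    calc ∑ i, ∑ p, ∑ q, M i p * M i q * S p q
        = ∑ k : Fin t, ∑ i, ∑ j, ∑ m, M i (k, j) * Sw j m * M i (k, m) := kron_quad M Sw
      _ = ∑ k : Fin t, Matrix.trace (A ^ (t - 1 - (k : ℕ)) * G * (Aᵀ) ^ (t - 1 - (k : ℕ))) := by
          refine Finset.sum_congr rfl fun k _ => ?_
          rw [hg_eq]
          rfl
      _ = ∑ s ∈ Finset.range t, Matrix.trace (A ^ s * G * (Aᵀ) ^ s) :=
          rev_sum (fun s => Matrix.trace (A ^ s * G * (Aᵀ) ^ s))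
      _ ≤ tr := hsg.sum_le_tsum _ (fun s _ => hg0 s)
  have hcb : ‖c‖ ^ 2 < δ := by
    have h1 : ‖c‖ ≤ specNorm A ^ t * ‖x₀‖ := euclidLin_pow_le A t x₀
    have h2 : ‖c‖ ^ 2 ≤ (specNorm A ^ t * ‖x₀‖) ^ 2 :=
      pow_le_pow_left₀ (norm_nonneg _) h1 2
    exact lt_of_le_of_lt h2 (hT₀ t (le_trans (Nat.le_succ T₀) ht))
  have hKle : ‖c‖ ^ 2 + ∑ i, ∑ p, ∑ q, M i p * M i q * S p q ≤ ε * r ^ 2 := by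
    linarith [hcb, hTrt, hδdef]
  unfold wcCVaR
  refine Real.iSup_nonpos fun P => ?_
  obtain ⟨h1, h2, h3, h4, h5⟩ := P.2
  haveI := h1
  refine cvar_le_of (β₀ := -r ^ 2) ?_
  have hfun : (fun ξ : EuclideanSpace ℝ (Fin t × Fin nw) =>
      max ((‖c + Matrix.toEuclideanLin M ξ‖ ^ 2 - r ^ 2) - (-r ^ 2)) 0)
      = fun ξ => ‖c + Matrix.toEuclideanLin M ξ‖ ^ 2 := by
    funext ξ
    have he : (‖c + Matrix.toEuclideanLin M ξ‖ ^ 2 - r ^ 2) - (-r ^ 2)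
        = ‖c + Matrix.toEuclideanLin M ξ‖ ^ 2 := by ring
    rw [he]
    exact max_eq_left (by positivity)
  have hIK : ∫ ξ, max ((fun w : EuclideanSpace ℝ (Fin t × Fin nw) =>
        ‖c + Matrix.toEuclideanLin M w‖ ^ 2 - r ^ 2) ξ - (-r ^ 2)) 0 ∂(P : Measure _)
      = ‖c‖ ^ 2 + ∑ i, ∑ p, ∑ q, M i p * M i q * S p q := by
    simp only []
    rw [show (fun ξ : EuclideanSpace ℝ (Fin t × Fin nw) =>
        max ((‖c + Matrix.toEuclideanLin M ξ‖ ^ 2 - r ^ 2) - (-r ^ 2)) 0)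
        = fun ξ => ‖c + Matrix.toEuclideanLin M ξ‖ ^ 2 from hfun]
    exact integral_quad S (P : Measure _) h2 h3 h4 h5 M c
  have hfin : -r ^ 2 + ε⁻¹ * (‖c‖ ^ 2 + ∑ i, ∑ p, ∑ q, M i p * M i q * S p q) ≤ 0 := by
    have h6 : ε⁻¹ * (‖c‖ ^ 2 + ∑ i, ∑ p, ∑ q, M i p * M i q * S p q)
        ≤ ε⁻¹ * (ε * r ^ 2) := mul_le_mul_of_nonneg_left hKle (inv_nonneg.mpr (le_of_lt εpos))
    have h7 : ε⁻¹ * (ε * r ^ 2) = r ^ 2 := by field_simp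
    linarith
  calc -r ^ 2 + ε⁻¹ * ∫ ξ, max ((fun w : EuclideanSpace ℝ (Fin t × Fin nw) =>
        ‖c + Matrix.toEuclideanLin M w‖ ^ 2 - r ^ 2) ξ - (-r ^ 2)) 0 ∂(P : Measure _)
      = -r ^ 2 + ε⁻¹ * (‖c‖ ^ 2 + ∑ i, ∑ p, ∑ q, M i p * M i q * S p q) := by rw [hIK]
    _ ≤ 0 := hfin
end

section
/- One-step worst-case CVaR bound: let ε ∈ (0,1), A ∈ ℝ^{n_x×n_x} with spectral norm ‖A‖ < 1, E ∈ ℝ^{n_x×n_w}, and Σ_w ∈ ℝ^{n_w×n_w} positive semidefinite. Then for every x ∈ ℝ^{n_x}: sup_{P ∈ M(Σ_w)} CVaR_ε^P[ ‖A x + E w‖² ] ≤ ‖A‖·‖x‖² + (1/(1 − ‖A‖))·(1/ε)·Tr(Σ_w Eᵀ E). -/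
open MeasureTheory Matrix Kronecker

private lemma key_ineq (u v X s : ℝ) (hu : 0 ≤ u) (hv : 0 ≤ v) (huX : u ≤ s * X)
    (hs0 : 0 ≤ s) (hs1 : s < 1) : (u + v)^2 ≤ s * X^2 + (1 - s)⁻¹ * v^2 := by
  have h1 : 0 < 1 - s := by linarith
  rw [← sub_le_iff_le_add', inv_mul_eq_div, le_div_iff₀ h1]
  nlinarith [mul_nonneg hs0 (sq_nonneg ((1-s)*X - v)),
    mul_nonneg (sub_nonneg.2 huX) (show (0:ℝ) ≤ s*X+u+2*v by nlinarith)]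

/-- one-step worst-case CVaR bound. -/
theorem stmt11 {nx nw : ℕ} (ε : ℝ) (hε : ε ∈ Set.Ioo (0 : ℝ) 1)
    (A : Matrix (Fin nx) (Fin nx) ℝ) (E : Matrix (Fin nx) (Fin nw) ℝ)
    (Sw : Matrix (Fin nw) (Fin nw) ℝ)
    (hA : specNorm A < 1) (hSw : Sw.PosSemidef) :
    ∀ x : EuclideanSpace ℝ (Fin nx),
      wcCVaR ε Sw
        (fun w => ‖Matrix.toEuclideanLin A x + Matrix.toEuclideanLin E w‖ ^ 2) ≤
      specNorm A * ‖x‖ ^ 2 +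
        (1 - specNorm A)⁻¹ * (ε⁻¹ * Matrix.trace (Sw * Eᵀ * E)) := by
  obtain ⟨hε0, hε1⟩ := hε
  intro x
  set s := specNorm A with hsdef
  have hs0 : 0 ≤ s := norm_nonneg _
  have h1s : 0 < 1 - s := by linarith
  have hεinv1 : (1:ℝ) ≤ ε⁻¹ := (one_le_inv₀ hε0).mpr hε1.le
  have hεinv0 : (0:ℝ) ≤ ε⁻¹ := by linarith
  have hsymm : ∀ j k, Sw k j = Sw j k := fun j k => by
    simpa using congrFun (congrFun hSw.1 j) k
  -- trace as a triple sum
  have hτsum : Matrix.trace (Sw * Eᵀ * E) = ∑ i, ∑ j, ∑ k, (E i j * E i k) * Sw j k := by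
    simp only [Matrix.trace, Matrix.diag, Matrix.mul_apply, Matrix.transpose_apply,
      Finset.sum_mul, Finset.mul_sum]
    rw [Finset.sum_comm]
    refine Finset.sum_congr rfl fun i _ => ?_
    rw [Finset.sum_comm]
    exact Finset.sum_congr rfl fun j _ => Finset.sum_congr rfl fun k _ => by
      rw [hsymm j k]; ring
  set τ := Matrix.trace (Sw * Eᵀ * E) with hτdef
  have hτ0 : 0 ≤ τ := by
    rw [hτsum]
    refine Finset.sum_nonneg fun i _ => ?_
    have := hSw.dotProduct_mulVec_nonneg (fun j => E i j)
    simp only [dotProduct, Matrix.mulVec, star, Pi.star_apply, star_trivial,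
      Finset.mul_sum, id] at this
    convert this using 2 with j
    exact Finset.sum_congr rfl fun k _ => by ring
  have hRHS0 : 0 ≤ s * ‖x‖ ^ 2 + (1 - s)⁻¹ * (ε⁻¹ * τ) :=
    add_nonneg (mul_nonneg hs0 (sq_nonneg _))
      (mul_nonneg (inv_nonneg.2 h1s.le) (mul_nonneg hεinv0 hτ0))
  refine Real.iSup_le ?_ hRHS0
  rintro ⟨P, hP⟩
  obtain ⟨hprob, hint1, hmean, hint2, hcov⟩ := hP
  haveI := hprob
  set T := Matrix.toEuclideanLin E with hTdef
  set a := Matrix.toEuclideanLin A x with hadef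
  set L : EuclideanSpace ℝ (Fin nw) → ℝ := fun w => ‖a + T w‖ ^ 2 with hLdef
  have haX : ‖a‖ ≤ s * ‖x‖ := by
    have h := (LinearMap.toContinuousLinearMap (Matrix.toEuclideanLin A)).le_opNorm x
    simp only [LinearMap.coe_toContinuousLinearMap'] at h
    exact h
  -- norm-squared formula
  have hnorm : ∀ w : EuclideanSpace ℝ (Fin nw), ‖T w‖^2 = ∑ i, (∑ j, E i j * w j)^2 := by
    intro w
    rw [hTdef, EuclideanSpace.norm_eq, Real.sq_sqrt (by positivity)]
    refine Finset.sum_congr rfl fun i _ => ?_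
    simp [Matrix.toEuclideanLin_apply, Matrix.mulVec, dotProduct, Real.norm_eq_abs, sq_abs]
  have hsq : ∀ (i : Fin nx) (w : EuclideanSpace ℝ (Fin nw)),
      (∑ j, E i j * w j)^2 = ∑ j, ∑ k, (E i j * E i k) * (w j * w k) := by
    intro i w
    rw [sq, Finset.sum_mul_sum]
    exact Finset.sum_congr rfl fun j _ => Finset.sum_congr rfl fun k _ => by ring
  have hIint : ∀ i : Fin nx,
      Integrable (fun w : EuclideanSpace ℝ (Fin nw) =>
        ∑ j, ∑ k, (E i j * E i k) * (w j * w k)) P :=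
    fun i => integrable_finset_sum _ fun j _ => integrable_finset_sum _ fun k _ =>
      ((hint2 j k).const_mul _)
  have hTsum : (fun w : EuclideanSpace ℝ (Fin nw) => ‖T w‖^2)
      = fun w => ∑ i, ∑ j, ∑ k, (E i j * E i k) * (w j * w k) :=
    funext fun w => by
      rw [hnorm w]; exact Finset.sum_congr rfl fun i _ => hsq i w
  have hI2 : Integrable (fun w : EuclideanSpace ℝ (Fin nw) => ‖T w‖^2) P := by
    rw [hTsum]; exact integrable_finset_sum _ fun i _ => hIint i
  have hInt2 : ∫ w, ‖T w‖^2 ∂P = τ := by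
    rw [hTsum, integral_finset_sum _ fun i _ => hIint i, hτsum]
    refine Finset.sum_congr rfl fun i _ => ?_
    rw [integral_finset_sum _ fun j _ => integrable_finset_sum _ fun k _ =>
      ((hint2 j k).const_mul _)]
    refine Finset.sum_congr rfl fun j _ => ?_
    rw [integral_finset_sum _ fun k _ => ((hint2 j k).const_mul _)]
    refine Finset.sum_congr rfl fun k _ => ?_
    rw [integral_const_mul, hcov j k]
  -- integrability of L
  have hTcont : Continuous T := T.continuous_of_finiteDimensional
  have hLcont : Continuous L := ((continuous_const.add hTcont).norm.pow 2)
  have hIL : Integrable L P := by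
    refine Integrable.mono ((hI2.const_mul 2).add (integrable_const (2*‖a‖^2)))
      hLcont.aestronglyMeasurable (Filter.Eventually.of_forall fun w => ?_)
    have h1 : ‖a + T w‖ ≤ ‖a‖ + ‖T w‖ := norm_add_le _ _
    have h2 : L w ≤ 2*‖T w‖^2 + 2*‖a‖^2 := by
      have := pow_le_pow_left₀ (norm_nonneg _) h1 2
      simp only [hLdef]
      nlinarith [sq_nonneg (‖a‖ - ‖T w‖)]
    have h3 : 0 ≤ L w := sq_nonneg _
    have h4 : (0:ℝ) ≤ 2*‖T w‖^2 + 2*‖a‖^2 := by positivity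
    simp only [Real.norm_eq_abs, abs_of_nonneg h3, Pi.add_apply, abs_of_nonneg h4]
    exact h2
  set EL := ∫ w, L w ∂P with hELdef
  -- lower bound on the CVaR objective
  have hf_lb : ∀ β : ℝ, EL ≤ β + ε⁻¹ * ∫ w, max (L w - β) 0 ∂P := by
    intro β
    have hmax_int : Integrable (fun w => max (L w - β) 0) P :=
      (hIL.sub (integrable_const β)).pos_part
    have hmax0 : 0 ≤ ∫ w, max (L w - β) 0 ∂P :=
      integral_nonneg fun w => le_max_right _ _
    rcases le_total EL β with hβ | hβ
    · linarith [mul_nonneg hεinv0 hmax0]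
    · have hm : EL - β ≤ ∫ w, max (L w - β) 0 ∂P := by
        have h5 : ∫ w, (L w - β) ∂P = EL - β := by
          rw [integral_sub hIL (integrable_const β), integral_const]
          simp
          rfl
        rw [← h5]
        exact integral_mono (hIL.sub (integrable_const β)) hmax_int
          fun w => le_max_left _ _
      linarith [mul_le_mul_of_nonneg_right hεinv1 hmax0]
  set β₀ := s * ‖x‖^2 with hβ₀def
  have hbdd : BddBelow (Set.range fun β : ℝ => β + ε⁻¹ * ∫ w, max (L w - β) 0 ∂P) :=
    ⟨EL, by rintro _ ⟨β, rfl⟩; exact hf_lb β⟩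
  have h1 : CVaR ε P L ≤ β₀ + ε⁻¹ * ∫ w, max (L w - β₀) 0 ∂P := by
    rw [CVaR]; exact ciInf_le hbdd β₀
  -- pointwise bound
  have hpt : ∀ w : EuclideanSpace ℝ (Fin nw), max (L w - β₀) 0 ≤ (1-s)⁻¹ * ‖T w‖^2 := by
    intro w
    have hg0 : (0:ℝ) ≤ (1-s)⁻¹ * ‖T w‖^2 := by positivity
    refine max_le ?_ hg0
    have h2 : L w ≤ (‖a‖ + ‖T w‖)^2 :=
      pow_le_pow_left₀ (norm_nonneg _) (norm_add_le _ _) 2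
    have h3 : (‖a‖ + ‖T w‖)^2 ≤ s * ‖x‖^2 + (1-s)⁻¹ * ‖T w‖^2 :=
      key_ineq _ _ _ _ (norm_nonneg _) (norm_nonneg _) haX hs0 (by linarith)
    simp only [hβ₀def]
    linarith
  have h2 : ∫ w, max (L w - β₀) 0 ∂P ≤ (1-s)⁻¹ * τ := by
    calc ∫ w, max (L w - β₀) 0 ∂P ≤ ∫ w, (1-s)⁻¹ * ‖T w‖^2 ∂P :=
          integral_mono (hIL.sub (integrable_const β₀)).pos_part (hI2.const_mul _) hpt
      _ = (1-s)⁻¹ * τ := by rw [integral_const_mul, hInt2]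
  have h3 : CVaR ε P L ≤ β₀ + ε⁻¹ * ((1-s)⁻¹ * τ) :=
    h1.trans (by linarith [mul_le_mul_of_nonneg_left h2 hεinv0])
  calc CVaR ε P L ≤ β₀ + ε⁻¹ * ((1-s)⁻¹ * τ) := h3
    _ = s * ‖x‖ ^ 2 + (1 - s)⁻¹ * (ε⁻¹ * τ) := by rw [hβ₀def]; ring
end

section
/- Worst-case CVaR positively invariant set (Theorem 2): consider x_{t+1} = A x_t + E w_t with spectral norm ‖A‖ < 1 and Σ_w positive semidefinite. If r > 0 satisfies r² ≥ (1/(ε·(1 − ‖A‖)²))·Tr(Σ_w Eᵀ E), then the ball D = {x : ‖x‖² ≤ r²} is worst-case CVaR positively invariant: for every x ∈ ℝ^{n_x} with ‖x‖² ≤ r² and every k ≥ 1, sup_{P ∈ M_k} CVaR_ε^P[ ‖A^k x + H_k w̄_k‖² − r² ] ≤ 0. -/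
set_option maxHeartbeats 1000000

open MeasureTheory Matrix Kronecker

/-! ### Auxiliary lemmas -/

lemma specNorm_nonneg' {m n : Type*} [Fintype m] [Fintype n] [DecidableEq n]
    (A : Matrix m n ℝ) : 0 ≤ specNorm A := norm_nonneg _

lemma norm_toEuclideanLin_apply_le' {m n : Type*} [Fintype m] [Fintype n] [DecidableEq n]
    (A : Matrix m n ℝ) (v : EuclideanSpace ℝ n) :
    ‖Matrix.toEuclideanLin A v‖ ≤ specNorm A * ‖v‖ :=
  (LinearMap.toContinuousLinearMap (Matrix.toEuclideanLin A)).le_opNorm v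

lemma toEuclideanLin_mul' {m n p : Type*} [Fintype m] [Fintype n] [Fintype p]
    [DecidableEq n] [DecidableEq p]
    (A : Matrix m n ℝ) (B : Matrix n p ℝ) :
    Matrix.toEuclideanLin (A * B) =
      (Matrix.toEuclideanLin A).comp (Matrix.toEuclideanLin B) := by
  simp [Matrix.toEuclideanLin_eq_toLin, Matrix.toLin_mul _ (PiLp.basisFun 2 ℝ n) _]

lemma specNorm_mul_le' {m n p : Type*} [Fintype m] [Fintype n] [Fintype p]
    [DecidableEq n] [DecidableEq p]
    (A : Matrix m n ℝ) (B : Matrix n p ℝ) :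
    specNorm (A * B) ≤ specNorm A * specNorm B := by
  apply ContinuousLinearMap.opNorm_le_bound _
    (mul_nonneg (specNorm_nonneg' A) (specNorm_nonneg' B))
  intro v
  have h1 : Matrix.toEuclideanLin (A * B) v =
      Matrix.toEuclideanLin A (Matrix.toEuclideanLin B v) := by
    rw [toEuclideanLin_mul']; rfl
  show ‖Matrix.toEuclideanLin (A * B) v‖ ≤ _
  rw [h1, mul_assoc]
  calc ‖Matrix.toEuclideanLin A (Matrix.toEuclideanLin B v)‖
      ≤ specNorm A * ‖Matrix.toEuclideanLin B v‖ := norm_toEuclideanLin_apply_le' _ _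
    _ ≤ specNorm A * (specNorm B * ‖v‖) :=
        mul_le_mul_of_nonneg_left (norm_toEuclideanLin_apply_le' _ _) (specNorm_nonneg' A)

lemma specNorm_one_le' {n : Type*} [Fintype n] [DecidableEq n] :
    specNorm (1 : Matrix n n ℝ) ≤ 1 := by
  apply ContinuousLinearMap.opNorm_le_bound _ zero_le_one
  intro v
  have h1 : Matrix.toEuclideanLin (1 : Matrix n n ℝ) v = v := by
    rw [Matrix.toEuclideanLin_eq_toLin, Matrix.toLin_one]; rfl
  show ‖Matrix.toEuclideanLin (1 : Matrix n n ℝ) v‖ ≤ 1 * ‖v‖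
  rw [h1, one_mul]

lemma specNorm_pow_le' {n : Type*} [Fintype n] [DecidableEq n]
    (A : Matrix n n ℝ) (k : ℕ) : specNorm (A ^ k) ≤ specNorm A ^ k := by
  induction k with
  | zero => simpa using specNorm_one_le'
  | succ k ih =>
    calc specNorm (A ^ (k+1)) = specNorm (A ^ k * A) := by rw [pow_succ]
      _ ≤ specNorm (A ^ k) * specNorm A := specNorm_mul_le' _ _
      _ ≤ specNorm A ^ k * specNorm A :=
          mul_le_mul_of_nonneg_right ih (specNorm_nonneg' A)
      _ = specNorm A ^ (k+1) := (pow_succ _ _).symm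

lemma euc_apply' {m n : Type*} [Fintype m] [Fintype n] [DecidableEq n]
    (A : Matrix m n ℝ) (v : EuclideanSpace ℝ n) (i : m) :
    Matrix.toEuclideanLin A v i = ∑ j, A i j * v j := by
  rw [Matrix.toEuclideanLin_apply]; rfl

lemma euc_norm_sq' {n : Type*} [Fintype n] (v : EuclideanSpace ℝ n) :
    ‖v‖ ^ 2 = ∑ i, (v i) ^ 2 := by
  rw [EuclideanSpace.norm_eq, Real.sq_sqrt (by positivity)]
  simp [sq_abs]

lemma Q_eq' {nx nw : ℕ} (Sw : Matrix (Fin nw) (Fin nw) ℝ) (hsym : Swᵀ = Sw)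
    (G : Matrix (Fin nx) (Fin nw) ℝ) :
    ∑ i, ∑ u, ∑ v, G i u * G i v * Sw u v = Matrix.trace (Gᵀ * G * Sw) := by
  have hR : Matrix.trace (Gᵀ * G * Sw) = ∑ u, ∑ v, ∑ i, G i u * G i v * Sw v u := by
    simp only [Matrix.trace, Matrix.diag, Matrix.mul_apply, Matrix.transpose_apply,
      Finset.sum_mul]
  rw [hR]
  rw [show (∑ i, ∑ u, ∑ v, G i u * G i v * Sw u v : ℝ)
      = ∑ u, ∑ i, ∑ v, G i u * G i v * Sw u v from Finset.sum_comm]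
  apply Finset.sum_congr rfl; intro u _
  rw [show (∑ i, ∑ v, G i u * G i v * Sw u v : ℝ)
      = ∑ v, ∑ i, G i u * G i v * Sw u v from Finset.sum_comm]
  apply Finset.sum_congr rfl; intro v _
  apply Finset.sum_congr rfl; intro i _
  have h2 : Sw u v = Sw v u := by
    conv_lhs => rw [← hsym]
    exact Matrix.transpose_apply _ _ _
  rw [h2]

lemma F2_eq' {nx nw : ℕ} (M : Matrix (Fin nx) (Fin nw) ℝ) :
    Matrix.trace (Mᵀ * M) = ∑ j, ∑ i, (M i j)^2 := by
  simp [Matrix.trace, Matrix.diag, Matrix.mul_apply, sq]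

lemma trace_T_eq' {nx nw : ℕ} (Sw : Matrix (Fin nw) (Fin nw) ℝ)
    (E : Matrix (Fin nx) (Fin nw) ℝ) :
    Matrix.trace (Sw * Eᵀ * E) = Matrix.trace (Eᵀ * E * Sw) := by
  rw [Matrix.mul_assoc]; exact Matrix.trace_mul_comm Sw (Eᵀ * E)

lemma QB_eq' {nx nw : ℕ} (B : Matrix (Fin nw) (Fin nw) ℝ)
    (G : Matrix (Fin nx) (Fin nw) ℝ) :
    Matrix.trace (Gᵀ * G * (Bᵀ * B)) = Matrix.trace ((G * Bᵀ)ᵀ * (G * Bᵀ)) := by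
  rw [Matrix.transpose_mul, Matrix.transpose_transpose]
  calc Matrix.trace (Gᵀ*G*(Bᵀ*B)) = Matrix.trace ((Gᵀ*G*Bᵀ)*B) := by
        rw [Matrix.mul_assoc (Gᵀ*G) Bᵀ B]
    _ = Matrix.trace (B*(Gᵀ*G*Bᵀ)) := Matrix.trace_mul_comm _ _
    _ = Matrix.trace (B*Gᵀ*(G*Bᵀ)) := by
        rw [Matrix.mul_assoc B Gᵀ (G*Bᵀ), Matrix.mul_assoc Gᵀ G Bᵀ]

lemma F2_mul_le' {nx nw : ℕ} (M : Matrix (Fin nx) (Fin nx) ℝ)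
    (N : Matrix (Fin nx) (Fin nw) ℝ) :
    ∑ j, ∑ i, ((M * N) i j)^2 ≤ specNorm M ^ 2 * ∑ j, ∑ i, (N i j)^2 := by
  rw [Finset.mul_sum]
  apply Finset.sum_le_sum
  intro j _
  set vj : EuclideanSpace ℝ (Fin nx) := (WithLp.equiv 2 _).symm (fun i => N i j) with hvj
  have hv : ∀ i, vj i = N i j := fun i => rfl
  have h1 : ∀ i, (M * N) i j = Matrix.toEuclideanLin M vj i := by
    intro i
    rw [euc_apply', Matrix.mul_apply]
    exact Finset.sum_congr rfl fun l _ => by rw [hv]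
  calc ∑ i, ((M * N) i j)^2 = ∑ i, (Matrix.toEuclideanLin M vj i)^2 :=
        Finset.sum_congr rfl fun i _ => by rw [h1]
    _ = ‖Matrix.toEuclideanLin M vj‖^2 := (euc_norm_sq' _).symm
    _ ≤ (specNorm M * ‖vj‖)^2 := by
        apply sq_le_sq' <;> nlinarith [norm_toEuclideanLin_apply_le' M vj,
          norm_nonneg (Matrix.toEuclideanLin M vj), norm_nonneg vj,
          mul_nonneg (norm_nonneg (M.toEuclideanLin vj)) (norm_nonneg vj)]
    _ = specNorm M ^2 * ‖vj‖^2 := by ring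
    _ = specNorm M ^2 * ∑ i, (N i j)^2 := by
        rw [euc_norm_sq']
        exact congrArg _ (Finset.sum_congr rfl fun i _ => by rw [hv])

lemma tau_expand' {nx nw : ℕ} (Sw : Matrix (Fin nw) (Fin nw) ℝ)
    (A : Matrix (Fin nx) (Fin nx) ℝ) (E : Matrix (Fin nx) (Fin nw) ℝ) (k : ℕ) :
    ∑ i, ∑ p, ∑ q, (Hmat A E k) i p * (Hmat A E k) i q
        * ((1 : Matrix (Fin k) (Fin k) ℝ) ⊗ₖ Sw) p q
      = ∑ t : Fin k, ∑ i, ∑ u, ∑ v,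
          (A ^ (k - 1 - (t:ℕ)) * E) i u * (A ^ (k - 1 - (t:ℕ)) * E) i v * Sw u v := by
  simp only [Fintype.sum_prod_type, Hmat, Matrix.of_apply, Matrix.kroneckerMap_apply,
    Matrix.one_apply, ite_mul, one_mul, zero_mul, mul_ite, mul_zero,
    Finset.sum_ite_eq, Finset.mem_univ, if_true]
  rw [Finset.sum_comm]
  refine Finset.sum_congr rfl fun t _ => Finset.sum_congr rfl fun i _ =>
    Finset.sum_congr rfl fun u _ => ?_
  rw [Finset.sum_comm]
  simp [Finset.sum_ite_eq]

lemma cvar_le' {ι : Type*} [Fintype ι] [DecidableEq ι] (ε : ℝ) (hε0 : 0 < ε)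
    (S : Matrix ι ι ℝ) {n : ℕ} (H : Matrix (Fin n) ι ℝ)
    (c : EuclideanSpace ℝ (Fin n)) (r : ℝ)
    (hm : ‖c‖ + Real.sqrt ((∑ i, ∑ p, ∑ q, H i p * H i q * S p q) / ε) ≤ r)
    (P : Measure (EuclideanSpace ℝ ι)) (hP : P ∈ MomentSet S) :
    CVaR ε P (fun w => ‖c + Matrix.toEuclideanLin H w‖ ^ 2 - r ^ 2) ≤ 0 := by
  obtain ⟨hprob, hint1, hmean, hint2, hcov⟩ := hP
  set m : ℝ := ‖c‖ with hmdef
  have hm0 : 0 ≤ m := norm_nonneg c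
  set τ : ℝ := ∑ i, ∑ p, ∑ q, H i p * H i q * S p q with hτdef
  set Lf : EuclideanSpace ℝ ι → ℝ :=
    fun w => ‖c + Matrix.toEuclideanLin H w‖ ^ 2 - r ^ 2 with hLf
  have hz_eq : (fun w : EuclideanSpace ℝ ι => ‖Matrix.toEuclideanLin H w‖ ^ 2)
      = fun w => ∑ i, ∑ p, ∑ q, H i p * H i q * (w p * w q) := by
    funext w
    rw [euc_norm_sq']
    refine Finset.sum_congr rfl fun i _ => ?_
    rw [euc_apply', sq, Finset.sum_mul_sum]
    exact Finset.sum_congr rfl fun p _ => Finset.sum_congr rfl fun q _ => by ring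
  have hint_sq : Integrable (fun w => ‖Matrix.toEuclideanLin H w‖ ^ 2) P := by
    rw [hz_eq]
    refine integrable_finset_sum _ fun i _ => integrable_finset_sum _ fun p _ =>
      integrable_finset_sum _ fun q _ => ?_
    exact (hint2 p q).const_mul _
  have hτ_eq : ∫ w, ‖Matrix.toEuclideanLin H w‖ ^ 2 ∂P = τ := by
    rw [hz_eq]
    rw [integral_finset_sum _ fun i _ => integrable_finset_sum _ fun p _ =>
      integrable_finset_sum _ fun q _ => (hint2 p q).const_mul _]
    refine Finset.sum_congr rfl fun i _ => ?_
    rw [integral_finset_sum _ fun p _ => integrable_finset_sum _ fun q _ =>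
      (hint2 p q).const_mul _]
    refine Finset.sum_congr rfl fun p _ => ?_
    rw [integral_finset_sum _ fun q _ => (hint2 p q).const_mul _]
    refine Finset.sum_congr rfl fun q _ => ?_
    rw [integral_const_mul, hcov p q]
  have hτ0 : 0 ≤ τ := by
    rw [← hτ_eq]
    exact integral_nonneg fun w => by positivity
  set ρ : ℝ := Real.sqrt (τ / ε) with hρdef
  have hρ0 : 0 ≤ ρ := Real.sqrt_nonneg _
  have hρ2 : ρ ^ 2 = ε⁻¹ * τ := by
    rw [hρdef, Real.sq_sqrt (div_nonneg hτ0 hε0.le), div_eq_inv_mul]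
  have hmr : m + ρ ≤ r := hm
  have hr0 : (0:ℝ) ≤ r := le_trans (by positivity) hmr
  have key : ∃ β₀ : ℝ, β₀ + ε⁻¹ * ∫ w, max (Lf w - β₀) 0 ∂P ≤ 0 := by
    by_cases hτpos : τ = 0
    · refine ⟨m ^ 2 - r ^ 2, ?_⟩
      have hz0ae : (fun w => ‖Matrix.toEuclideanLin H w‖ ^ 2) =ᵐ[P] 0 := by
        rw [← integral_eq_zero_iff_of_nonneg (fun w => by positivity) hint_sq]
        rw [hτ_eq, hτpos]
      have hmax : (fun w => max (Lf w - (m ^ 2 - r ^ 2)) 0) ≤ᵐ[P] 0 := by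
        filter_upwards [hz0ae] with w hw
        have hw' : ‖Matrix.toEuclideanLin H w‖ = 0 := by
          have := hw
          simp only [Pi.zero_apply] at this
          nlinarith [norm_nonneg (Matrix.toEuclideanLin H w)]
        have htri : ‖c + Matrix.toEuclideanLin H w‖ ≤ m := by
          calc ‖c + Matrix.toEuclideanLin H w‖ ≤ m + ‖Matrix.toEuclideanLin H w‖ :=
                norm_add_le _ _
            _ = m := by rw [hw', add_zero]
        have : Lf w - (m ^ 2 - r ^ 2) ≤ 0 := by
          simp only [hLf]
          nlinarith [norm_nonneg (c + Matrix.toEuclideanLin H w)]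
        simp [max_le_iff, this]
      have hI : ∫ w, max (Lf w - (m ^ 2 - r ^ 2)) 0 ∂P ≤ 0 := integral_nonpos_of_ae hmax
      have hmr2 : m ^ 2 ≤ r ^ 2 := by nlinarith
      nlinarith [mul_nonpos_of_nonneg_of_nonpos (inv_nonneg.mpr hε0.le) hI]
    · have hτpos' : 0 < τ := lt_of_le_of_ne hτ0 (Ne.symm hτpos)
      have hρpos : 0 < ρ := Real.sqrt_pos.mpr (div_pos hτpos' hε0)
      refine ⟨m ^ 2 - r ^ 2 + m * ρ, ?_⟩
      set d : ℝ := m / ρ with hd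
      have hd0 : 0 ≤ d := div_nonneg hm0 hρ0
      have hdρ : d * ρ = m := div_mul_cancel₀ m hρpos.ne'
      set lam : ℝ := 1 + d with hlam
      have hlam0 : 0 ≤ lam := by positivity
      have hpt : ∀ w : EuclideanSpace ℝ ι,
          max (Lf w - (m ^ 2 - r ^ 2 + m * ρ)) 0 ≤ lam * ‖Matrix.toEuclideanLin H w‖ ^ 2 := by
        intro w
        set z : ℝ := ‖Matrix.toEuclideanLin H w‖ with hzdef
        have hz0 : 0 ≤ z := norm_nonneg _
        have htri : ‖c + Matrix.toEuclideanLin H w‖ ≤ m + z := norm_add_le _ _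
        have hLb : Lf w ≤ (m + z) ^ 2 - r ^ 2 := by
          simp only [hLf]
          nlinarith [norm_nonneg (c + Matrix.toEuclideanLin H w)]
        have hkey : (m + z) ^ 2 - r ^ 2 - (m ^ 2 - r ^ 2 + m * ρ) ≤ lam * z ^ 2 := by
          have h2z : d * ρ * z = m * z := by rw [hdρ]
          have h2ρ : d * ρ * ρ = m * ρ := by rw [hdρ]
          nlinarith [mul_nonneg hd0 (sq_nonneg (z - ρ)), h2z, h2ρ]
        apply max_le
        · calc Lf w - (m ^ 2 - r ^ 2 + m * ρ)
              ≤ (m + z) ^ 2 - r ^ 2 - (m ^ 2 - r ^ 2 + m * ρ) := by linarith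
            _ ≤ lam * z ^ 2 := hkey
        · positivity
      have hI : ∫ w, max (Lf w - (m ^ 2 - r ^ 2 + m * ρ)) 0 ∂P ≤ lam * τ := by
        calc ∫ w, max (Lf w - (m ^ 2 - r ^ 2 + m * ρ)) 0 ∂P
            ≤ ∫ w, lam * ‖Matrix.toEuclideanLin H w‖ ^ 2 ∂P :=
              integral_mono_of_nonneg (Filter.Eventually.of_forall fun w => le_max_right _ _)
                (hint_sq.const_mul lam) (Filter.Eventually.of_forall hpt)
          _ = lam * τ := by rw [integral_const_mul, hτ_eq]
      have harith : m ^ 2 - r ^ 2 + m * ρ + ε⁻¹ * (lam * τ) ≤ 0 := by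
        have hinvτ : ε⁻¹ * τ = ρ ^ 2 := hρ2.symm
        have h1 : ε⁻¹ * (lam * τ) = lam * ρ ^ 2 := by
          rw [← hinvτ]; ring
        have h2 : lam * ρ ^ 2 = ρ ^ 2 + m * ρ := by
          have h2' : lam * ρ ^ 2 = ρ ^ 2 + d * ρ * ρ := by rw [hlam]; ring
          rw [h2', hdρ]
        have h3 : (m + ρ) ^ 2 ≤ r ^ 2 := by nlinarith
        rw [h1, h2]
        nlinarith [h3]
      calc m ^ 2 - r ^ 2 + m * ρ + ε⁻¹ * ∫ w, max (Lf w - (m ^ 2 - r ^ 2 + m * ρ)) 0 ∂P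
          ≤ m ^ 2 - r ^ 2 + m * ρ + ε⁻¹ * (lam * τ) := by
            have := mul_le_mul_of_nonneg_left hI (inv_nonneg.mpr hε0.le)
            linarith
        _ ≤ 0 := harith
  obtain ⟨β₀, hβ₀⟩ := key
  rw [CVaR]
  by_cases hb : BddBelow (Set.range fun β : ℝ => β + ε⁻¹ * ∫ w, max (Lf w - β) 0 ∂P)
  · exact le_trans (ciInf_le hb β₀) hβ₀
  · rw [Real.iInf_of_not_bddBelow hb]

/-- Theorem 2: worst-case CVaR positively invariant set for
`x_{t+1} = A x_t + E w_t`. -/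
theorem stmt12 {nx nw : ℕ} (ε : ℝ) (hε : ε ∈ Set.Ioo (0 : ℝ) 1)
    (A : Matrix (Fin nx) (Fin nx) ℝ) (E : Matrix (Fin nx) (Fin nw) ℝ)
    (Sw : Matrix (Fin nw) (Fin nw) ℝ)
    (hA : specNorm A < 1) (hSw : Sw.PosSemidef)
    (r : ℝ) (hr : 0 < r)
    (hr2 : (ε * (1 - specNorm A) ^ 2)⁻¹ * Matrix.trace (Sw * Eᵀ * E) ≤ r ^ 2) :
    ∀ x : EuclideanSpace ℝ (Fin nx), ‖x‖ ^ 2 ≤ r ^ 2 → ∀ k : ℕ, 1 ≤ k →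
      wcCVaR ε ((1 : Matrix (Fin k) (Fin k) ℝ) ⊗ₖ Sw)
        (fun w => ‖Matrix.toEuclideanLin (A ^ k) x +
          Matrix.toEuclideanLin (Hmat A E k) w‖ ^ 2 - r ^ 2) ≤ 0 := by
  obtain ⟨hε0, hε1⟩ := hε
  intro x hx k hk
  set a : ℝ := specNorm A with hadef
  have ha0 : 0 ≤ a := specNorm_nonneg' A
  have ha1 : a < 1 := hA
  have hxr : ‖x‖ ≤ r := by nlinarith [norm_nonneg x]
  have hak0 : (0:ℝ) ≤ a ^ k := pow_nonneg ha0 k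
  have hak1 : a ^ k ≤ 1 := pow_le_one₀ ha0 ha1.le
  have hmbound : ‖Matrix.toEuclideanLin (A ^ k) x‖ ≤ a ^ k * r := by
    calc ‖Matrix.toEuclideanLin (A ^ k) x‖ ≤ specNorm (A ^ k) * ‖x‖ :=
          norm_toEuclideanLin_apply_le' _ _
      _ ≤ a ^ k * r :=
          mul_le_mul (specNorm_pow_le' A k) hxr (norm_nonneg x) hak0
  obtain ⟨B, hB⟩ : ∃ B : Matrix (Fin nw) (Fin nw) ℝ, Sw = Bᴴ * B := by
    open scoped MatrixOrder in
    exact CStarAlgebra.nonneg_iff_eq_star_mul_self.mp hSw.nonneg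
  have hB' : Sw = Bᵀ * B := by
    rw [hB]
    congr 1
  have hsym : Swᵀ = Sw := by
    have h := hSw.1
    rw [Matrix.IsHermitian] at h
    ext i j
    have := congrFun (congrFun h i) j
    simpa [Matrix.conjTranspose_apply] using this
  set T : ℝ := Matrix.trace (Sw * Eᵀ * E) with hT
  have hTQ : T = ∑ j, ∑ i, ((E * Bᵀ) i j)^2 := by
    rw [hT, trace_T_eq']
    rw [show Eᵀ * E * Sw = Eᵀ * E * (Bᵀ * B) from by rw [← hB']]
    rw [QB_eq', F2_eq']
  have hT0 : 0 ≤ T := by rw [hTQ]; positivity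
  set tauS : ℝ := ∑ i, ∑ p, ∑ q, (Hmat A E k) i p * (Hmat A E k) i q
      * ((1 : Matrix (Fin k) (Fin k) ℝ) ⊗ₖ Sw) p q with htauS
  have hτb : tauS ≤ T * ∑ j ∈ Finset.range k, (a ^ j) ^ 2 := by
    rw [htauS, tau_expand']
    have hterm : ∀ t : Fin k,
        (∑ i, ∑ u, ∑ v, (A ^ (k - 1 - (t:ℕ)) * E) i u * (A ^ (k - 1 - (t:ℕ)) * E) i v * Sw u v)
          ≤ (a ^ (k - 1 - (t:ℕ))) ^ 2 * T := by
      intro t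
      rw [Q_eq' Sw hsym]
      rw [show (A ^ (k - 1 - (t:ℕ)) * E)ᵀ * (A ^ (k - 1 - (t:ℕ)) * E) * Sw
          = (A ^ (k - 1 - (t:ℕ)) * E)ᵀ * (A ^ (k - 1 - (t:ℕ)) * E) * (Bᵀ * B) from by
        rw [← hB']]
      rw [QB_eq', F2_eq']
      rw [show A ^ (k - 1 - (t:ℕ)) * E * Bᵀ = A ^ (k - 1 - (t:ℕ)) * (E * Bᵀ) from
        Matrix.mul_assoc _ _ _]
      calc ∑ j, ∑ i, ((A ^ (k - 1 - (t:ℕ)) * (E * Bᵀ)) i j) ^ 2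
          ≤ specNorm (A ^ (k - 1 - (t:ℕ))) ^ 2 * ∑ j, ∑ i, ((E * Bᵀ) i j) ^ 2 :=
            F2_mul_le' _ _
        _ ≤ (a ^ (k - 1 - (t:ℕ))) ^ 2 * T := by
            rw [hTQ]
            apply mul_le_mul_of_nonneg_right _ (by positivity)
            have h1 := specNorm_pow_le' A (k - 1 - (t:ℕ))
            have h2 := specNorm_nonneg' (A ^ (k - 1 - (t:ℕ)))
            nlinarith
    calc (∑ t : Fin k, ∑ i, ∑ u, ∑ v,
            (A ^ (k - 1 - (t:ℕ)) * E) i u * (A ^ (k - 1 - (t:ℕ)) * E) i v * Sw u v)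
        ≤ ∑ t : Fin k, (a ^ (k - 1 - (t:ℕ))) ^ 2 * T :=
          Finset.sum_le_sum fun t _ => hterm t
      _ = ∑ j ∈ Finset.range k, (a ^ (k - 1 - j)) ^ 2 * T := by
          rw [← Fin.sum_univ_eq_sum_range (fun j => (a ^ (k - 1 - j)) ^ 2 * T) k]
      _ = ∑ j ∈ Finset.range k, (a ^ j) ^ 2 * T := by
          rw [← Finset.sum_range_reflect (fun j => (a ^ j) ^ 2 * T) k]
      _ = T * ∑ j ∈ Finset.range k, (a ^ j) ^ 2 := by
          rw [← Finset.sum_mul, mul_comm]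
  set Sk : ℝ := ∑ j ∈ Finset.range k, a ^ j with hSk
  have hSk0 : 0 ≤ Sk := Finset.sum_nonneg fun j _ => pow_nonneg ha0 j
  have hgeom : (1 - a) * Sk = 1 - a ^ k := by
    have hG := geom_sum_mul a k
    have h1 : (1 - a) * Sk = -(Sk * (a - 1)) := by ring
    rw [h1, hSk, hG]
    ring
  have hsqsum0 : 0 ≤ ∑ j ∈ Finset.range k, (a ^ j) ^ 2 :=
    Finset.sum_nonneg fun j _ => sq_nonneg _
  have hsq : ∑ j ∈ Finset.range k, (a ^ j) ^ 2 ≤ Sk ^ 2 := by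
    have h1 : ∀ j ∈ Finset.range k, (a ^ j) ^ 2 ≤ a ^ j * Sk := by
      intro j hj
      rw [sq]
      exact mul_le_mul_of_nonneg_left
        (Finset.single_le_sum (fun l _ => pow_nonneg ha0 l) hj) (pow_nonneg ha0 j)
    calc ∑ j ∈ Finset.range k, (a ^ j) ^ 2 ≤ ∑ j ∈ Finset.range k, a ^ j * Sk :=
          Finset.sum_le_sum h1
      _ = Sk ^ 2 := by rw [← Finset.sum_mul, ← hSk, sq]
  have h1a : (0:ℝ) < 1 - a := by linarith
  have hTε : T / ε ≤ (1 - a) ^ 2 * r ^ 2 := by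
    have hpos : (0:ℝ) < ε * (1 - a) ^ 2 := by positivity
    have hTle : T ≤ ε * (1 - a) ^ 2 * r ^ 2 := by
      rw [inv_mul_le_iff₀ hpos] at hr2
      linarith [hr2]
    rw [div_le_iff₀ hε0]
    nlinarith [hTle]
  have hsqrt : Real.sqrt (tauS / ε) ≤ (1 - a ^ k) * r := by
    have hbig : tauS / ε ≤ ((1 - a ^ k) * r) ^ 2 := by
      have hA1 : tauS / ε ≤ (T / ε) * (∑ j ∈ Finset.range k, (a ^ j) ^ 2) := by
        have h := (div_le_div_iff_of_pos_right hε0).mpr hτb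
        calc tauS / ε ≤ (T * ∑ j ∈ Finset.range k, (a ^ j) ^ 2) / ε := h
          _ = (T / ε) * (∑ j ∈ Finset.range k, (a ^ j) ^ 2) := by ring
      have hA2 : (T / ε) * (∑ j ∈ Finset.range k, (a ^ j) ^ 2)
          ≤ ((1 - a) ^ 2 * r ^ 2) * Sk ^ 2 := by
        apply mul_le_mul hTε hsq hsqsum0 (by positivity)
      have hA3 : ((1 - a) ^ 2 * r ^ 2) * Sk ^ 2 = ((1 - a ^ k) * r) ^ 2 := by
        calc ((1 - a) ^ 2 * r ^ 2) * Sk ^ 2 = ((1 - a) * Sk) ^ 2 * r ^ 2 := by ring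
          _ = (1 - a ^ k) ^ 2 * r ^ 2 := by rw [hgeom]
          _ = ((1 - a ^ k) * r) ^ 2 := by ring
      linarith
    calc Real.sqrt (tauS / ε) ≤ Real.sqrt (((1 - a ^ k) * r) ^ 2) := Real.sqrt_le_sqrt hbig
      _ = (1 - a ^ k) * r := Real.sqrt_sq (by nlinarith)
  rw [wcCVaR]
  apply Real.iSup_nonpos
  intro P
  apply cvar_le' ε hε0 _ (Hmat A E k) (Matrix.toEuclideanLin (A ^ k) x) r _ P P.2
  have hfin : a ^ k * r + (1 - a ^ k) * r = r := by ring
  calc ‖Matrix.toEuclideanLin (A ^ k) x‖ + Real.sqrt (tauS / ε)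
      ≤ a ^ k * r + (1 - a ^ k) * r := add_le_add hmbound hsqrt
    _ = r := hfin
end

section
/- One-step worst-case CVaR bound with bounded input: let ε ∈ (0,1), A ∈ ℝ^{n_x×n_x} with spectral norm ‖A‖ < 1, D ∈ ℝ^{n_x×n_v}, E ∈ ℝ^{n_x×n_w}, Σ_w positive semidefinite, and d ≥ 0. Then for every x ∈ ℝ^{n_x} and every v ∈ ℝ^{n_v} with ‖v‖ ≤ d: sup_{P ∈ M(Σ_w)} CVaR_ε^P[ ‖A x + D v + E w‖² ] ≤ ‖A‖·‖x‖² + (1/(1 − ‖A‖))·( ‖D‖·d + √((1/ε)·Tr(Σ_w Eᵀ E)) )². -/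
open MeasureTheory Matrix Kronecker

set_option maxHeartbeats 2000000 in
/-- one-step worst-case CVaR bound with bounded input. -/
theorem stmt15 {nx nv nw : ℕ} (ε : ℝ) (hε : ε ∈ Set.Ioo (0 : ℝ) 1)
    (A : Matrix (Fin nx) (Fin nx) ℝ) (D : Matrix (Fin nx) (Fin nv) ℝ)
    (E : Matrix (Fin nx) (Fin nw) ℝ) (Sw : Matrix (Fin nw) (Fin nw) ℝ)
    (hA : specNorm A < 1) (hSw : Sw.PosSemidef)
    (d : ℝ) (hd : 0 ≤ d) :
    ∀ x : EuclideanSpace ℝ (Fin nx), ∀ v : EuclideanSpace ℝ (Fin nv), ‖v‖ ≤ d →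
      wcCVaR ε Sw
        (fun w => ‖Matrix.toEuclideanLin A x + Matrix.toEuclideanLin D v +
          Matrix.toEuclideanLin E w‖ ^ 2) ≤
      specNorm A * ‖x‖ ^ 2 +
        (1 - specNorm A)⁻¹ *
          (specNorm D * d + Real.sqrt (ε⁻¹ * Matrix.trace (Sw * Eᵀ * E))) ^ 2 := by
  obtain ⟨hε0, hε1⟩ := hε
  intro x v hv
  -- abbreviations
  set a := specNorm A with ha_def
  have ha0 : 0 ≤ a := norm_nonneg _
  have h1a : (0:ℝ) < 1 - a := by linarith
  set c := specNorm D * d with hc_def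
  have hc0 : 0 ≤ c := mul_nonneg (norm_nonneg _) hd
  set T := Matrix.trace (Sw * Eᵀ * E) with hT_def
  set r := Real.sqrt (ε⁻¹ * T) with hr_def
  have hr0 : 0 ≤ r := Real.sqrt_nonneg _
  set RHS := a * ‖x‖ ^ 2 + (1 - a)⁻¹ * (c + r) ^ 2 with hRHS_def
  have hRHS0 : (0:ℝ) ≤ RHS := by positivity
  set L : EuclideanSpace ℝ (Fin nw) → ℝ := fun w =>
    ‖Matrix.toEuclideanLin A x + Matrix.toEuclideanLin D v + Matrix.toEuclideanLin E w‖ ^ 2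
    with hL_def
  show (⨆ P : MomentSet Sw, CVaR ε (P : Measure (EuclideanSpace ℝ (Fin nw))) L) ≤ RHS
  refine Real.iSup_le ?_ hRHS0
  rintro ⟨P, hprob, hint1, hmean, hint2, hcov⟩
  haveI : IsProbabilityMeasure P := hprob
  -- the squared norm of E w as an explicit quadratic
  have hcoord : ∀ (w : EuclideanSpace ℝ (Fin nw)) (i : Fin nx),
      (Matrix.toEuclideanLin E w) i = ∑ j, E i j * w j := by
    intro w i
    simp [Matrix.toEuclideanLin_apply, Matrix.mulVec, dotProduct]
  have hs2 : ∀ w : EuclideanSpace ℝ (Fin nw), ‖Matrix.toEuclideanLin E w‖ ^ 2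
      = ∑ j, ∑ k, (∑ i, E i j * E i k) * (w j * w k) := by
    intro w
    have h0 : ‖Matrix.toEuclideanLin E w‖ ^ 2 = ∑ i, ((Matrix.toEuclideanLin E w) i) ^ 2 := by
      rw [EuclideanSpace.norm_eq, Real.sq_sqrt (by positivity)]
      simp [Real.norm_eq_abs, sq_abs]
    rw [h0]
    simp_rw [hcoord w]
    have h : ∀ i, (∑ j, E i j * w j) ^ 2 = ∑ j, ∑ k, (E i j * E i k) * (w j * w k) := by
      intro i
      rw [sq, Finset.sum_mul_sum]
      exact Finset.sum_congr rfl fun j _ => Finset.sum_congr rfl fun k _ => by ring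
    simp_rw [h, Finset.sum_mul]
    rw [Finset.sum_comm]
    exact Finset.sum_congr rfl fun j _ => by rw [Finset.sum_comm]
  -- integrability of the quadratic and its integral
  have hint : Integrable (fun w => ‖Matrix.toEuclideanLin E w‖ ^ 2) P := by
    simp_rw [hs2]
    exact integrable_finset_sum _ fun j _ => integrable_finset_sum _ fun k _ =>
      (hint2 j k).const_mul _
  have hTint : ∫ w, ‖Matrix.toEuclideanLin E w‖ ^ 2 ∂P = T := by
    simp_rw [hs2]
    rw [integral_finset_sum _ fun j _ => integrable_finset_sum _ fun k _ =>
      (hint2 j k).const_mul _]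
    have : ∀ j : Fin nw, ∫ w, (∑ k, (∑ i, E i j * E i k) * (w j * w k)) ∂P
        = ∑ k, (∑ i, E i j * E i k) * Sw j k := by
      intro j
      rw [integral_finset_sum _ fun k _ => (hint2 j k).const_mul _]
      exact Finset.sum_congr rfl fun k _ => by rw [integral_const_mul, hcov j k]
    simp_rw [this]
    rw [hT_def]
    simp only [Matrix.trace, Matrix.diag, Matrix.mul_apply, Matrix.transpose_apply,
      Finset.sum_mul, Finset.mul_sum]
    refine Finset.sum_congr rfl fun j _ => ?_
    rw [Finset.sum_comm]
    exact Finset.sum_congr rfl fun k _ => Finset.sum_congr rfl fun i _ => by ring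
  have hT0 : 0 ≤ T := hTint ▸ integral_nonneg fun w => sq_nonneg _
  have hr2 : r ^ 2 = ε⁻¹ * T := Real.sq_sqrt (by positivity)
  -- pointwise bound on the loss
  have hL : ∀ w : EuclideanSpace ℝ (Fin nw),
      L w ≤ a * ‖x‖ ^ 2 + (1 - a)⁻¹ * (c + ‖Matrix.toEuclideanLin E w‖) ^ 2 := by
    intro w
    set s := ‖Matrix.toEuclideanLin E w‖ with hs_def
    have hs0 : 0 ≤ s := norm_nonneg _
    have htri : ‖Matrix.toEuclideanLin A x + Matrix.toEuclideanLin D v +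
        Matrix.toEuclideanLin E w‖ ≤ a * ‖x‖ + (c + s) := by
      refine (norm_add₃_le).trans ?_
      have h1 : ‖Matrix.toEuclideanLin A x‖ ≤ a * ‖x‖ := by
        have h := (LinearMap.toContinuousLinearMap (Matrix.toEuclideanLin A)).le_opNorm x
        simp only [LinearMap.coe_toContinuousLinearMap'] at h
        exact h
      have h2 : ‖Matrix.toEuclideanLin D v‖ ≤ c := by
        have := (LinearMap.toContinuousLinearMap (Matrix.toEuclideanLin D)).le_opNorm v
        simp only [LinearMap.coe_toContinuousLinearMap'] at this
        calc ‖Matrix.toEuclideanLin D v‖ ≤ specNorm D * ‖v‖ := this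
        _ ≤ specNorm D * d := mul_le_mul_of_nonneg_left hv (norm_nonneg _)
      linarith
    have hsq : L w ≤ (a * ‖x‖ + (c + s)) ^ 2 := by
      rw [hL_def]
      exact pow_le_pow_left₀ (norm_nonneg _) htri 2
    refine hsq.trans ?_
    -- (a*X + q)^2 ≤ a*X^2 + (1-a)⁻¹ * q^2 for 0 ≤ a < 1
    set X := ‖x‖
    set q := c + s
    rw [← sub_nonneg]
    have hiden : a * X ^ 2 + (1 - a)⁻¹ * q ^ 2 - (a * X + q) ^ 2
        = (1 - a)⁻¹ * (a * ((1 - a) * X - q) ^ 2) := by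
      field_simp
      ring
    rw [hiden]
    exact mul_nonneg (inv_nonneg.2 h1a.le) (mul_nonneg ha0 (sq_nonneg _))
  -- bound the CVaR
  show CVaR ε P L ≤ RHS
  unfold CVaR
  by_cases hbdd : BddBelow (Set.range fun β : ℝ => β + ε⁻¹ * ∫ ξ, max (L ξ - β) 0 ∂P)
  swap
  · rw [Real.iInf_of_not_bddBelow hbdd]; exact hRHS0
  rcases eq_or_lt_of_le hr0 with hr | hrpos
  · -- degenerate case r = 0
    have hTzero : T = 0 := by
      have : ε⁻¹ * T = 0 := by rw [← hr2, ← hr]; ring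
      have hεinv : ε⁻¹ ≠ 0 := by positivity
      exact (mul_eq_zero.1 this).resolve_left hεinv
    have hszero : (fun w => ‖Matrix.toEuclideanLin E w‖ ^ 2) =ᵐ[P] 0 := by
      rw [← integral_eq_zero_iff_of_nonneg_ae (Filter.Eventually.of_forall fun w => sq_nonneg _)
        hint]
      rw [hTint, hTzero]
    set β₀ := a * ‖x‖ ^ 2 + (1 - a)⁻¹ * c ^ 2 with hβ₀_def
    have hmax0 : (fun ξ => max (L ξ - β₀) 0) =ᵐ[P] 0 := by
      filter_upwards [hszero] with w hw
      have hsw : ‖Matrix.toEuclideanLin E w‖ = 0 := by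
        simp only [Pi.zero_apply] at hw
        exact pow_eq_zero_iff (n := 2) (by norm_num) |>.1 hw
      have h1 := hL w
      rw [hsw] at h1
      have h2 : L w ≤ β₀ := by rw [hβ₀_def]; nlinarith [h1]
      simp only [Pi.zero_apply]
      simp [max_eq_right, h2]
    have hI0 : ∫ ξ, max (L ξ - β₀) 0 ∂P = 0 := by
      rw [integral_congr_ae hmax0]; simp
    refine le_trans (ciInf_le hbdd β₀) ?_
    rw [hI0]
    have : β₀ ≤ RHS := by
      rw [hβ₀_def, hRHS_def, ← hr]; nlinarith [sq_nonneg c, inv_nonneg.2 h1a.le]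
    simpa using this
  · -- main case r > 0
    set K := (1 - a)⁻¹ * ((r + c) / r) with hK_def
    have hK0 : 0 ≤ K := mul_nonneg (inv_nonneg.2 h1a.le) (div_nonneg (by linarith) hr0)
    set β₀ := a * ‖x‖ ^ 2 + (1 - a)⁻¹ * (c ^ 2 + c * r) with hβ₀_def
    have hptw : ∀ w : EuclideanSpace ℝ (Fin nw),
        max (L w - β₀) 0 ≤ K * ‖Matrix.toEuclideanLin E w‖ ^ 2 := by
      intro w
      set s := ‖Matrix.toEuclideanLin E w‖ with hs_def
      have hs0 : 0 ≤ s := norm_nonneg _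
      have hq : (c + s) ^ 2 ≤ c ^ 2 + c * r + ((r + c) / r) * s ^ 2 := by
        have h2s : (2 * s - r) * r ≤ s ^ 2 := by nlinarith [sq_nonneg (s - r)]
        have h2s' : 2 * s - r ≤ s ^ 2 / r := (le_div_iff₀ hrpos).2 h2s
        have h3 := mul_le_mul_of_nonneg_left h2s' hc0
        have hre : (r + c) / r * s ^ 2 = s ^ 2 + c * (s ^ 2 / r) := by
          field_simp
        rw [hre]
        nlinarith [h3]
      have hmul := mul_le_mul_of_nonneg_left hq (inv_nonneg.2 h1a.le)
      have hLb : L w ≤ β₀ + K * s ^ 2 := by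
        have h0 := hL w
        rw [hβ₀_def, hK_def]
        nlinarith [h0, hmul]
      have hKs : 0 ≤ K * s ^ 2 := mul_nonneg hK0 (sq_nonneg _)
      exact max_le (by linarith) hKs
    have hIle : ∫ ξ, max (L ξ - β₀) 0 ∂P ≤ K * T := by
      have h1 : ∫ ξ, max (L ξ - β₀) 0 ∂P ≤ ∫ w, K * ‖Matrix.toEuclideanLin E w‖ ^ 2 ∂P :=
        integral_mono_of_nonneg (Filter.Eventually.of_forall fun w => le_max_right _ _)
          (hint.const_mul K) (Filter.Eventually.of_forall hptw)
      rwa [integral_const_mul, hTint] at h1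
    refine le_trans (ciInf_le hbdd β₀) ?_
    have hmono : ε⁻¹ * ∫ ξ, max (L ξ - β₀) 0 ∂P ≤ ε⁻¹ * (K * T) :=
      mul_le_mul_of_nonneg_left hIle (by positivity)
    have hTr : T = ε * r ^ 2 := by
      rw [hr2]; field_simp
    have hfin : β₀ + ε⁻¹ * (K * T) = RHS := by
      rw [hβ₀_def, hK_def, hRHS_def, hTr]
      field_simp
      ring
    linarith [hmono, hfin.le]
end
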